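/- arXiv:1108.4325 — 2 statements merged into one kernel-verified Lean document; each statement's English description precedes it below -/
import Mathlib

section
/- Factorization Lemma (Lemma 2.2). Fix p ∈ [0,‖D‖_∞^{-1}] such that θ(p) = P_p(|C(0)| = ∞) = 0, a directed edge (u,v), a vertex y, and events E, F. Then E_p[ 1{E on C̃^{(u,v)}(y), F off C̃^{(u,v)}(y)} ] = E_0[ 1{E on C̃^{(u,v)}_0(y)} · E_1[ 1{F off C̃^{(u,v)}_0(y)} ] ], where the subscripts 0 and 1 refer to two independent percolation configurations with the same law P_p, and C̃^{(u,v)}_0(y) is the restricted cluster in configuration 0. Moreover, when E ⊆ {u ∈ C̃^{(u,v)}(y)} ∩ {v ∉ C̃^{(u,v)}(y)}, the event on the left-hand side is independent of the occupation status of the edge (u,v). -/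
open MeasureTheory Filter
open scoped ENNReal Topology Classical

noncomputable section

namespace Percolation

/-- Vertices of the lattice `ℤ^d`. -/
abbrev Vert (d : ℕ) := Fin d → ℤ

/-- Euclidean norm of a lattice point. -/
def euc {d : ℕ} (x : Vert d) : ℝ := Real.sqrt (∑ i, ((x i : ℝ)) ^ 2)

/-- Sup norm of a lattice point. -/
def snorm' {d : ℕ} (x : Vert d) : ℕ := Finset.univ.sup fun i => (x i).natAbs

/-- Unordered edges (bonds) of the complete graph on `ℤ^d`. -/
abbrev Edge (d : ℕ) := Sym2 (Vert d)

/-- Percolation configurations: each bond is open (`true`) or closed (`false`). -/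
abbrev Config (d : ℕ) := Edge d → Bool

/-- `ℝ≥0∞`-valued indicator of a proposition. -/
def ind (p : Prop) : ℝ≥0∞ := if p then 1 else 0

/-- Symmetrisation of a step distribution. Under the symmetry assumption
`D (-x) = D x` it agrees with `fun x y => D (y - x)`. -/
def symD {d : ℕ} (D : Vert d → ℝ) (x y : Vert d) : ℝ := (D (x - y) + D (y - x)) / 2

lemma symD_comm {d : ℕ} (D : Vert d → ℝ) (x y : Vert d) : symD D x y = symD D y x := by
  unfold symD; ring

/-- The weight attached to an unordered edge by the step distribution `D`. -/
def edgeProb {d : ℕ} (D : Vert d → ℝ) : Edge d → ℝ :=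
  Sym2.lift ⟨symD D, symD_comm D⟩

/-- A bond percolation model on `ℤ^d`: a step distribution `D` which is a
lattice-symmetric probability distribution on `ℤ^d` vanishing at the origin,
together with, for every parameter `p`, the probability measure `P p` on
configurations under which the bonds are independently open, the bond `{x,y}`
being open with probability `p * D (y - x)` (for admissible `p`). -/
structure Model (d : ℕ) where
  D : Vert d → ℝ
  P : ℝ → Measure (Config d)
  D_zero : D 0 = 0
  D_nonneg : ∀ x, 0 ≤ D x
  D_symm : ∀ x, D (-x) = D x
  D_perm : ∀ (σ : Equiv.Perm (Fin d)) (x : Vert d), D (x ∘ σ) = D x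
  D_flip : ∀ ε : Fin d → ℤ, (∀ i, ε i = 1 ∨ ε i = -1) →
      ∀ x : Vert d, (D fun i => ε i * x i) = D x
  D_sum : HasSum D 1
  P_prob : ∀ p, IsProbabilityMeasure (P p)
  P_cylinder : ∀ p : ℝ, 0 ≤ p → (∀ x, p * D x ≤ 1) →
      ∀ (S : Finset (Edge d)) (f : Edge d → Bool),
        P p {ω | ∀ e ∈ S, ω e = f e} =
          ∏ e ∈ S, ENNReal.ofReal (if f e then p * edgeProb D e else 1 - p * edgeProb D e)

/-- `x` and `y` are distinct and joined by an open bond. -/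
def openStep {d : ℕ} (ω : Config d) (x y : Vert d) : Prop := x ≠ y ∧ ω s(x, y) = true

/-- `{x ↔ y}`: `x` is connected to `y` by a path of open bonds. -/
def Connected {d : ℕ} (ω : Config d) (x y : Vert d) : Prop :=
  Relation.ReflTransGen (openStep ω) x y

/-- Connectivity using only open bonds belonging to the bond set `K`. -/
def ConnectedIn {d : ℕ} (ω : Config d) (K : Set (Edge d)) (x y : Vert d) : Prop :=
  Relation.ReflTransGen (fun a b => a ≠ b ∧ s(a, b) ∈ K ∧ ω s(a, b) = true) x y

/-- The open cluster of `x`. -/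
def cluster {d : ℕ} (ω : Config d) (x : Vert d) : Set (Vert d) := {y | Connected ω x y}

/-- The two-point event `{x ↔ y}`. -/
def conn {d : ℕ} (x y : Vert d) : Set (Config d) := {ω | Connected ω x y}

/-- The cluster of `x` reaches euclidean distance `> r` from the origin,
i.e. the event `{x ↔ Q_r^c}` holds in `ω`. -/
def Arm {d : ℕ} (ω : Config d) (x : Vert d) (r : ℝ) : Prop :=
  ∃ y : Vert d, r < euc y ∧ Connected ω x y

/-- The one-arm event `{x ↔ Q_r^c}`. -/
def armEvent {d : ℕ} (x : Vert d) (r : ℝ) : Set (Config d) := {ω | Arm ω x r}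

/-- The euclidean ball `Q_r` (as a set of vertices). -/
def ballSet (d : ℕ) (r : ℝ) : Set (Vert d) := {x | euc x ≤ r}

namespace Model

variable {d : ℕ} (M : Model d)

/-- The two-point function `τ_p`. -/
def tau (p : ℝ) (x : Vert d) : ℝ≥0∞ := M.P p (conn 0 x)

/-- The susceptibility `χ(p)`. -/
def chi (p : ℝ) : ℝ≥0∞ := ∑' x : Vert d, M.tau p x

/-- The critical point `p_c = sup {p : χ(p) < ∞}`. -/
def pc : ℝ := sSup {p : ℝ | 0 ≤ p ∧ M.chi p ≠ ∞}

/-- The triangle diagram `△_{p_c}(0)`. -/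
def triangleDiagram : ℝ≥0∞ :=
  ∑' x : Vert d, ∑' y : Vert d, M.tau M.pc x * M.tau M.pc (y - x) * M.tau M.pc y

/-- The strong triangle condition with parameter `β`: `△_{p_c}(0) ≤ 1 + O(β)`. -/
def StrongTriangle (β : ℝ) : Prop := M.triangleDiagram ≤ 1 + ENNReal.ofReal β

/-- The susceptibility measure `Q_p(F) = χ(p)⁻¹ ∑_x P_p(F ∩ {0 ↔ x})`. -/
def Qp (p : ℝ) (F : Set (Config d)) : ℝ≥0∞ :=
  (∑' x : Vert d, M.P p (F ∩ conn 0 x)) / M.chi p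

end Model

/-- Cylinder events: events determined by the states of finitely many bonds. -/
def IsCylinder {d : ℕ} (F : Set (Config d)) : Prop :=
  ∃ S : Finset (Edge d), ∀ ω ω' : Config d, (∀ e ∈ S, ω e = ω' e) → (ω ∈ F ↔ ω' ∈ F)

/-- `F` is determined by the bonds with both endpoints in `Q_m`. -/
def DeterminedOnBall {d : ℕ} (F : Set (Config d)) (m : ℝ) : Prop :=
  ∀ ω ω' : Config d,
    (∀ e : Edge d, (∀ v ∈ e, v ∈ ballSet d m) → ω e = ω' e) → (ω ∈ F ↔ ω' ∈ F)

/-- Nearest-neighbour percolation. -/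
def IsNearestNeighbor {d : ℕ} (M : Model d) : Prop :=
  ∀ x : Vert d, M.D x = if euc x = 1 then 1 / (2 * (d : ℝ)) else 0

/-- Finite-range spread-out percolation with parameter `L`. -/
def IsFiniteRangeSpreadOut {d : ℕ} (M : Model d) (L : ℕ) : Prop :=
  ∀ x : Vert d, M.D x =
    if x ≠ 0 ∧ snorm' x ≤ L then ((2 * (L : ℝ) + 1) ^ d - 1)⁻¹ else 0

/-- Long-range spread-out percolation with parameters `L` and `α`. -/
def IsLongRangeSpreadOut {d : ℕ} (M : Model d) (L : ℕ) (α : ℝ) : Prop :=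
  ∃ c : ℝ, 0 < c ∧ ∀ x : Vert d, x ≠ 0 →
    M.D x = c / max (euc x / (L : ℝ)) 1 ^ ((d : ℝ) + α)

/-- Admissible long-range exponents: `α ∈ (0,2) ∪ (2,∞)`. -/
def GoodAlpha (α : ℝ) : Prop := 0 < α ∧ α ≠ 2

/-- The high-dimensional model classes of the paper, with `a` the effective
exponent `2 ∧ α` (read as `2` for the finite-range models). -/
def ModelClass {d : ℕ} (M : Model d) (a : ℝ) : Prop :=
  (IsNearestNeighbor M ∧ 19 ≤ d ∧ a = 2) ∨
  (∃ L : ℕ, IsFiniteRangeSpreadOut M L ∧ 6 < d ∧ a = 2) ∨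
  (∃ (L : ℕ) (α : ℝ), IsLongRangeSpreadOut M L α ∧ GoodAlpha α ∧
      3 * min 2 α < (d : ℝ) ∧ a = min 2 α)

/-- The one-arm probability is of order `r^{-1/ρ}`:
`c r^{-1/ρ} ≤ P_{p_c}(0 ↔ Q_r^c) ≤ C r^{-1/ρ}` for all `r ≥ 1`. -/
def OneArmBounds {d : ℕ} (M : Model d) (ρ : ℝ) : Prop :=
  ∃ c C : ℝ, 0 < c ∧ c ≤ C ∧ ∀ r : ℝ, 1 ≤ r →
    ENNReal.ofReal (c * r ^ (-(1 / ρ))) ≤ M.P M.pc (armEvent 0 r) ∧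
      M.P M.pc (armEvent 0 r) ≤ ENNReal.ofReal (C * r ^ (-(1 / ρ)))

/-- The configuration `ω` restricted to the vertex set `A`: every bond not
having both endpoints in `A` is made closed. -/
def restrictConfig {d : ℕ} (ω : Config d) (A : Set (Vert d)) : Config d :=
  fun e => if ∀ v ∈ e, v ∈ A then ω e else false

/-- The event `E` occurs on the vertex set `A` in the configuration `ω`. -/
def OccursOn {d : ℕ} (E : Set (Config d)) (A : Set (Vert d)) (ω : Config d) : Prop :=
  restrictConfig ω A ∈ E

/-- The event `E` occurs off the vertex set `A` in the configuration `ω`. -/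
def OccursOff {d : ℕ} (E : Set (Config d)) (A : Set (Vert d)) (ω : Config d) : Prop :=
  restrictConfig ω Aᶜ ∈ E

/-- The configuration `ω` with the bond `e` made closed. -/
def closeEdge {d : ℕ} (ω : Config d) (e : Edge d) : Config d := Function.update ω e false

/-- The configuration `ω` with the bond `e` made open. -/
def openEdge' {d : ℕ} (ω : Config d) (e : Edge d) : Config d := Function.update ω e true

/-- The restricted cluster `C̃^e(A)` of the vertex set `A`: everything that `A`
is connected to after the bond `e` is made closed. -/
def tilCSet {d : ℕ} (ω : Config d) (e : Edge d) (A : Set (Vert d)) : Set (Vert d) :=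
  {z | ∃ a ∈ A, Connected (closeEdge ω e) a z}

/-- The restricted cluster `C̃^{(u,v)}(y)`. -/
def tilC {d : ℕ} (ω : Config d) (u v y : Vert d) : Set (Vert d) :=
  {z | Connected (closeEdge ω s(u, v)) y z}

/-- `{x ↔ y on A}`. -/
def ConnOn {d : ℕ} (ω : Config d) (A : Set (Vert d)) (x y : Vert d) : Prop :=
  Connected (restrictConfig ω A) x y

/-- `{x ↔ y through A}`, also written `{x ↔^A y}`. -/
def ConnThrough {d : ℕ} (ω : Config d) (A : Set (Vert d)) (x y : Vert d) : Prop :=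
  Connected ω x y ∧ ¬ ConnOn ω Aᶜ x y

/-- `{x ↔ Q_r^c on A}`. -/
def ArmOn {d : ℕ} (ω : Config d) (A : Set (Vert d)) (x : Vert d) (r : ℝ) : Prop :=
  Arm (restrictConfig ω A) x r

/-- `{x ↔ Q_r^c through A}`. -/
def ArmThrough {d : ℕ} (ω : Config d) (A : Set (Vert d)) (x : Vert d) (r : ℝ) : Prop :=
  Arm ω x r ∧ ¬ ArmOn ω Aᶜ x r

/-- `(u,v)` is a directed pivotal bond for the connection `x ↔ y` in `ω`:
with the bond closed, `x` is connected to `u` and `v` to `y` but `x` is not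
connected to `y`, while with the bond open `x` is connected to `y`. -/
def PivotalConn {d : ℕ} (ω : Config d) (u v x y : Vert d) : Prop :=
  Connected (openEdge' ω s(u, v)) x y ∧ ¬ Connected (closeEdge ω s(u, v)) x y ∧
    Connected (closeEdge ω s(u, v)) x u ∧ Connected (closeEdge ω s(u, v)) v y

/-- `(u,v)` is a directed pivotal bond for the one-arm event `{x ↔ Q_r^c}`. -/
def PivotalArm {d : ℕ} (ω : Config d) (u v x : Vert d) (r : ℝ) : Prop :=
  Arm (openEdge' ω s(u, v)) x r ∧ ¬ Arm (closeEdge ω s(u, v)) x r ∧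
    Connected (closeEdge ω s(u, v)) x u ∧ Arm (closeEdge ω s(u, v)) v r

/-- `(u,v)` is an open directed pivotal bond for `x ↔ y`. -/
def OpenPivotalConn {d : ℕ} (ω : Config d) (u v x y : Vert d) : Prop :=
  ω s(u, v) = true ∧ PivotalConn ω u v x y

/-- `(u,v)` is an open directed pivotal bond for `{x ↔ Q_r^c}`. -/
def OpenPivotalArm {d : ℕ} (ω : Config d) (u v x : Vert d) (r : ℝ) : Prop :=
  ω s(u, v) = true ∧ PivotalArm ω u v x r

/-- The event `E'(v,x;A)`. -/
def Eprime {d : ℕ} (ω : Config d) (v x : Vert d) (A : Set (Vert d)) : Prop :=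
  ConnThrough ω A v x ∧
    ∀ u₁ v₁ : Vert d, PivotalConn ω u₁ v₁ v x → ¬ ConnThrough ω A v u₁

/-- The event `E''(v,r;A)`. -/
def Edprime {d : ℕ} (ω : Config d) (v : Vert d) (r : ℝ) (A : Set (Vert d)) : Prop :=
  ArmThrough ω A v r ∧
    ∀ u₁ v₁ : Vert d, PivotalArm ω u₁ v₁ v r → ¬ ConnThrough ω A v u₁

/-- The event `H'(v,z,x;A) = E'(v,x;A) ∩ ({v ↔ z} ∘ {z ↔ x})`. -/
def Hprime {d : ℕ} (ω : Config d) (v z x : Vert d) (A : Set (Vert d)) : Prop :=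
  Eprime ω v x A ∧ ∃ K : Set (Edge d), ConnectedIn ω K v z ∧ ConnectedIn ω Kᶜ z x

/-- `{A ⇔ x}`: the vertex set `A` is doubly connected to `x`. -/
def DoubleConnSet {d : ℕ} (ω : Config d) (A : Set (Vert d)) (x : Vert d) : Prop :=
  x ∈ A ∨ ∃ K : Set (Edge d),
    (∃ a ∈ A, ConnectedIn ω K a x) ∧ ∃ a ∈ A, ConnectedIn ω Kᶜ a x

/-- `{A ⇔ Q_r^c}`: the vertex set `A` is doubly connected to `Q_r^c`. -/
def DoubleArmSet {d : ℕ} (ω : Config d) (A : Set (Vert d)) (r : ℝ) : Prop :=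
  ∃ K : Set (Edge d),
    (∃ a ∈ A, ∃ y : Vert d, r < euc y ∧ ConnectedIn ω K a y) ∧
      ∃ a ∈ A, ∃ y : Vert d, r < euc y ∧ ConnectedIn ω Kᶜ a y

/-- `{A ↔ Q_r^c}`. -/
def SetArm {d : ℕ} (ω : Config d) (A : Set (Vert d)) (r : ℝ) : Prop :=
  ∃ a ∈ A, Arm ω a r

/-- The event (for a directed bond `b`) appearing in the cutting-bond
partition: `E'(v,b̲;A)` together with `b ∈ E_r` being open and pivotal for
`{v ↔ Q_r^c}`. -/
def CutAt {d : ℕ} (ω : Config d) (v : Vert d) (r : ℝ) (A : Set (Vert d))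
    (b : Vert d × Vert d) : Prop :=
  euc b.1 ≤ r ∧ Eprime ω v b.1 A ∧ ω s(b.1, b.2) = true ∧ PivotalArm ω b.1 b.2 v r

/-- The weight `p_c D(v-u)` of a directed bond `(u,v)`. -/
def edgeWeight {d : ℕ} (M : Model d) (b : Vert d × Vert d) : ℝ≥0∞ :=
  ENNReal.ofReal (M.pc * M.D (b.2 - b.1))

/-- Membership of a directed bond in `E_r`. -/
def inEr {d : ℕ} (r : ℝ) (b : Vert d × Vert d) : Prop := euc b.1 ≤ r

/-- The nested expectations of the lace expansion: each additional bond in the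
list gives a new independent critical configuration with the indicator of
`E'(w, u_j; C̃_{j-1})`, and the recursion records the restricted cluster
`C̃_j = C̃^{(u_j,v_j)}(v_{j-1})` passed on to the next configuration; `final`
is evaluated on the last cluster and vertex. -/
def laceRec {d : ℕ} (M : Model d) (final : Set (Vert d) → Vert d → ℝ≥0∞) :
    List (Vert d × Vert d) → Set (Vert d) → Vert d → ℝ≥0∞
  | [], A, w => final A w
  | b :: L, A, w =>
      ∫⁻ ω, ind (Eprime ω w b.1 A) *
        laceRec M final L (tilC ω b.1 b.2 w) b.2 ∂ M.P M.pc

/-- Generic lace-expansion coefficient with `n+1` directed bonds summed over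
`E_r`, initial (configuration-`0`) indicator `init` and final factor `final`. -/
def laceSum {d : ℕ} (M : Model d) (init : Config d → Vert d → Prop) (m r : ℝ)
    (final : Set (Vert d) → Vert d → ℝ≥0∞) (n : ℕ) : ℝ≥0∞ :=
  ∑' es : Fin (n + 1) → Vert d × Vert d,
    ind (∀ j, inEr r (es j)) * (∏ j, edgeWeight M (es j)) *
      ∫⁻ ω₀, ind (init ω₀ (es 0).1) *
        laceRec M final (List.ofFn fun j : Fin n => es j.succ)
          (tilCSet ω₀ s((es 0).1, (es 0).2) (ballSet d m)) (es 0).2 ∂ M.P M.pc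

/-- The lace-expansion coefficients `π^{(n)}(x,r;F)`. -/
def piCoeff {d : ℕ} (M : Model d) (F : Set (Config d)) (m r : ℝ) (x : Vert d) :
    ℕ → ℝ≥0∞
  | 0 => M.P M.pc (F ∩ {ω | Connected ω 0 x ∧ DoubleConnSet ω (ballSet d m) x})
  | n + 1 =>
      laceSum M (fun ω u => ω ∈ F ∧ Connected ω 0 u ∧ DoubleConnSet ω (ballSet d m) u) m r
        (fun A w => M.P M.pc {ω | Eprime ω w x A}) n

/-- The lace-expansion coefficients `ξ^{(n)}(r;F)`. -/
def xiCoeff {d : ℕ} (M : Model d) (F : Set (Config d)) (m r : ℝ) : ℕ → ℝ≥0∞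
  | 0 => M.P M.pc (F ∩ {ω | Arm ω 0 r ∧ DoubleArmSet ω (ballSet d m) r})
  | n + 1 =>
      laceSum M (fun ω u => ω ∈ F ∧ Connected ω 0 u ∧ DoubleConnSet ω (ballSet d m) u) m r
        (fun A w => M.P M.pc {ω | Edprime ω w r A}) n

/-- The final factor of `γ^{(n)}`, consuming the last directed bond `b`. -/
def gammaFinal {d : ℕ} (M : Model d) (r : ℝ) (b : Vert d × Vert d)
    (A : Set (Vert d)) (w : Vert d) : ℝ≥0∞ :=
  ∫⁻ ω, ind (OccursOn {ω' | Eprime ω' w b.1 A ∧ Arm ω' w r} (tilC ω b.1 b.2 w) ω) *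
      M.P M.pc {ω₁ | ArmOn ω₁ (tilC ω b.1 b.2 w)ᶜ b.2 r} ∂ M.P M.pc

/-- The lace-expansion coefficients `γ^{(n)}(r;F)`. -/
def gammaCoeff {d : ℕ} (M : Model d) (F : Set (Config d)) (m r : ℝ) : ℕ → ℝ≥0∞
  | 0 => ∑' b : Vert d × Vert d,
      ind (inEr r b) * edgeWeight M b *
        ∫⁻ ω, ind (OccursOn
            (F ∩ {ω' | Connected ω' 0 b.1 ∧ DoubleConnSet ω' (ballSet d m) b.1 ∧
              SetArm ω' (ballSet d m) r})
            (tilCSet ω s(b.1, b.2) (ballSet d m)) ω) *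
          M.P M.pc {ω₁ | ArmOn ω₁ (tilCSet ω s(b.1, b.2) (ballSet d m))ᶜ b.2 r} ∂ M.P M.pc
  | n + 1 => ∑' es : Fin (n + 2) → Vert d × Vert d,
      ind (∀ j, inEr r (es j)) * (∏ j, edgeWeight M (es j)) *
        ∫⁻ ω₀, ind (ω₀ ∈ F ∧ Connected ω₀ 0 (es 0).1 ∧
              DoubleConnSet ω₀ (ballSet d m) (es 0).1) *
          laceRec M (gammaFinal M r (es (Fin.last (n + 1))))
            (List.ofFn fun j : Fin n => es (j.succ.castSucc : Fin (n + 2)))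
            (tilCSet ω₀ s((es 0).1, (es 0).2) (ballSet d m)) (es 0).2 ∂ M.P M.pc

/-- `P_{p_c}(w ↔ Q_r^c) - P_{p_c}^{A}(w ↔ Q_r^c)`. -/
def diffArm {d : ℕ} (M : Model d) (r : ℝ) (A : Set (Vert d)) (w : Vert d) : ℝ≥0∞ :=
  M.P M.pc (armEvent w r) - M.P M.pc {ω | ArmOn ω Aᶜ w r}

/-- The lace-expansion remainder `R^{(N)}(r;F)`. -/
def RCoeff {d : ℕ} (M : Model d) (F : Set (Config d)) (m r : ℝ) (N : ℕ) : ℝ≥0∞ :=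
  laceSum M (fun ω u => ω ∈ F ∧ Connected ω 0 u ∧ DoubleConnSet ω (ballSet d m) u) m r
    (diffArm M r) N

/-- The lace-expansion coefficients `ψ^{(n)}(v,r;F)`. -/
def psiCoeff {d : ℕ} (M : Model d) (F : Set (Config d)) (m r : ℝ) (n : ℕ)
    (v : Vert d) : ℝ≥0∞ :=
  ∑' u : Vert d, ind (euc u ≤ r) * ENNReal.ofReal (M.pc * M.D (v - u)) *
    piCoeff M F m r u n

/-- The truncated coefficients `π^{(n)}_m(x,r)`. -/
def piM {d : ℕ} (M : Model d) (m r : ℝ) (x : Vert d) : ℕ → ℝ≥0∞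
  | 0 => M.P M.pc {ω | Eprime ω 0 x (ballSet d m)}
  | n + 1 =>
      laceSum M (fun ω u => Eprime ω 0 u (ballSet d m)) m r
        (fun A w => M.P M.pc {ω | Eprime ω w x A}) n

/-- The truncated coefficients `φ^{(n)}_m(z,x,r)`. -/
def phiM {d : ℕ} (M : Model d) (m r : ℝ) (z x : Vert d) : ℕ → ℝ≥0∞
  | 0 => M.P M.pc {ω | Hprime ω 0 z x (ballSet d m)}
  | n + 1 =>
      laceSum M (fun ω u => Eprime ω 0 u (ballSet d m)) m r
        (fun A w => M.P M.pc {ω | Hprime ω w z x A}) n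

/-- `Π̃_m(x,r)`. -/
def PiTilde {d : ℕ} (M : Model d) (m r : ℝ) (x : Vert d) : ℝ≥0∞ :=
  ∑' n : ℕ, piM M m r x n

/-- `Φ̃_m(x,y,r)`. -/
def PhiTilde {d : ℕ} (M : Model d) (m r : ℝ) (x y : Vert d) : ℝ≥0∞ :=
  ∑' n : ℕ, phiM M m r x y n

/-- A backbone bond: the directed bond `(u,v)` is open and `{0 ↔ u}` and
`{v ↔ ∞}` occur disjointly. -/
def BackboneEdge {d : ℕ} (ω : Config d) (u v : Vert d) : Prop :=
  u ≠ v ∧ ω s(u, v) = true ∧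
    ∃ K : Set (Edge d), ConnectedIn ω K 0 u ∧ {y | ConnectedIn ω Kᶜ v y}.Infinite

/-- A backbone-pivotal bond: the open directed bond `(u,v)` is used by every
infinite self-avoiding walk in the cluster of the origin starting at `0`. -/
def BackbonePivotal {d : ℕ} (ω : Config d) (u v : Vert d) : Prop :=
  u ≠ v ∧ ω s(u, v) = true ∧ (cluster ω 0).Infinite ∧
    ¬ (cluster (closeEdge ω s(u, v)) 0).Infinite ∧
    Connected (closeEdge ω s(u, v)) 0 u ∧ (cluster (closeEdge ω s(u, v)) v).Infinite

/-- `b` is the `k`-th open (directed) pivotal bond for `{0 ↔ x}` (`k ≥ 1`). -/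
def NthPivotal {d : ℕ} (ω : Config d) (x : Vert d) (k : ℕ)
    (b : Vert d × Vert d) : Prop :=
  OpenPivotalConn ω b.1 b.2 0 x ∧
    {b' : Vert d × Vert d | OpenPivotalConn ω b'.1 b'.2 0 x ∧
        Connected (closeEdge ω s(b.1, b.2)) 0 b'.2}.ncard = k - 1

/-- `b` is the `k`-th backbone-pivotal bond (`k ≥ 1`). -/
def NthBbPivotal {d : ℕ} (ω : Config d) (k : ℕ) (b : Vert d × Vert d) : Prop :=
  BackbonePivotal ω b.1 b.2 ∧
    {b' : Vert d × Vert d | BackbonePivotal ω b'.1 b'.2 ∧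
        Connected (closeEdge ω s(b.1, b.2)) 0 b'.2}.ncard = k - 1

/-- `Z_m^x`: the union of the first `m` sausages of the connection `{0 ↔ x}`. -/
def ZmConn {d : ℕ} (ω : Config d) (x : Vert d) (m : ℕ) : Set (Vert d) :=
  {z | ∃ k, 1 ≤ k ∧ k ≤ m ∧ ∃ b : Vert d × Vert d,
      NthPivotal ω x k b ∧ Connected (closeEdge ω s(b.1, b.2)) 0 z}

/-- `Z_m^∞`: the union of the first `m` backbone sausages. -/
def ZmInf {d : ℕ} (ω : Config d) (m : ℕ) : Set (Vert d) :=
  {z | ∃ k, 1 ≤ k ∧ k ≤ m ∧ ∃ b : Vert d × Vert d,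
      NthBbPivotal ω k b ∧ Connected (closeEdge ω s(b.1, b.2)) 0 z}

/-- A bond of `S[0,x]`: the open bond `(b₁,b₂)` with `{0 ↔ b₁}` and
`{b₂ ↔ x}` occurring disjointly. -/
def SEdge {d : ℕ} (ω : Config d) (x : Vert d) (b : Vert d × Vert d) : Prop :=
  b.1 ≠ b.2 ∧ ω s(b.1, b.2) = true ∧
    ∃ K : Set (Edge d), ConnectedIn ω K 0 b.1 ∧ ConnectedIn ω Kᶜ b.2 x

/-! ### Auxiliary material for the factorization lemma -/

section FactorizationAux

open Set MeasurableSpace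

variable {d : ℕ}

/-- The bonds having an endpoint in `A`. -/
def meets (A : Set (Vert d)) : Set (Edge d) := {e | ∃ z ∈ e, z ∈ A}

/-- `S` is determined by the bonds in `B`. -/
def Det (B : Set (Edge d)) (S : Set (Config d)) : Prop :=
  ∀ ω ω' : Config d, (∀ e ∈ B, ω e = ω' e) → (ω ∈ S ↔ ω' ∈ S)

lemma det_of {B : Set (Edge d)} {S : Set (Config d)}
    (h : ∀ ω ω' : Config d, (∀ e ∈ B, ω e = ω' e) → ω ∈ S → ω' ∈ S) : Det B S :=
  fun ω ω' hag => ⟨h ω ω' hag, h ω' ω fun e he => (hag e he).symm⟩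

lemma Det.inter {B : Set (Edge d)} {S T : Set (Config d)} (hS : Det B S) (hT : Det B T) :
    Det B (S ∩ T) := fun ω ω' h => and_congr (hS ω ω' h) (hT ω ω' h)

lemma closeEdge_eq_true {ω : Config d} {e₀ e : Edge d} :
    closeEdge ω e₀ e = true ↔ e ≠ e₀ ∧ ω e = true := by
  unfold closeEdge
  rcases eq_or_ne e e₀ with rfl | h
  · simp
  · rw [Function.update_of_ne h]; simp [h]

lemma Connected.mono' {ω ω' : Config d} (h : ∀ e, ω e = true → ω' e = true) {a b : Vert d}
    (hc : Connected ω a b) : Connected ω' a b :=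
  Relation.ReflTransGen.mono (r := openStep ω) (p := openStep ω')
    (fun x y (hxy : openStep ω x y) => (⟨hxy.1, h _ hxy.2⟩ : openStep ω' x y)) _ _ hc

lemma restrictConfig_apply (ω : Config d) (A : Set (Vert d)) (e : Edge d) :
    restrictConfig ω A e = if ∀ z ∈ e, z ∈ A then ω e else false := rfl

lemma restrict_eq_of_agree {A : Set (Vert d)} {ω ω' : Config d}
    (h : ∀ e : Edge d, (∀ z ∈ e, z ∈ A) → ω e = ω' e) :
    restrictConfig ω A = restrictConfig ω' A := by
  funext e
  by_cases he : ∀ z ∈ e, z ∈ A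
  · rw [restrictConfig_apply, restrictConfig_apply, if_pos he, if_pos he]; exact h e he
  · rw [restrictConfig_apply, restrictConfig_apply, if_neg he, if_neg he]

/-! #### Determinedness of the relevant events -/

lemma tilC_subset_of_agree {u v y : Vert d} {ω ω' : Config d} {A : Set (Vert d)}
    (hA : tilC ω u v y = A) (hag : ∀ e ∈ meets A, ω e = ω' e) :
    ∀ z, Connected (closeEdge ω s(u,v)) y z → Connected (closeEdge ω' s(u,v)) y z := by
  intro z hz
  induction hz with
  | refl => exact .refl
  | @tail b c hyb hbc ih =>
      obtain ⟨hbc1, hbc2⟩ := hbc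
      rw [closeEdge_eq_true] at hbc2
      have hb : b ∈ A := by rw [← hA]; exact hyb
      have he : s(b, c) ∈ meets A := ⟨b, Sym2.mem_mk_left b c, hb⟩
      refine ih.tail ⟨hbc1, ?_⟩
      rw [closeEdge_eq_true]
      exact ⟨hbc2.1, (hag _ he) ▸ hbc2.2⟩

lemma tilC_reach_subset {u v y : Vert d} {ω ω' : Config d} {A : Set (Vert d)}
    (hA : tilC ω u v y = A) (hag : ∀ e ∈ meets A, ω e = ω' e) :
    ∀ z, Connected (closeEdge ω' s(u,v)) y z → z ∈ A ∧ Connected (closeEdge ω s(u,v)) y z := by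
  intro z hz
  induction hz with
  | refl =>
      refine ⟨?_, .refl⟩
      rw [← hA]; exact Relation.ReflTransGen.refl
  | @tail b c hyb hbc ih =>
      obtain ⟨hb, hyb'⟩ := ih
      obtain ⟨hne, hop⟩ := hbc
      rw [closeEdge_eq_true] at hop
      have he : s(b, c) ∈ meets A := ⟨b, Sym2.mem_mk_left b c, hb⟩
      have hopen : ω s(b, c) = true := by rw [hag _ he]; exact hop.2
      have hcon : Connected (closeEdge ω s(u,v)) y c :=
        hyb'.tail ⟨hne, closeEdge_eq_true.2 ⟨hop.1, hopen⟩⟩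
      refine ⟨?_, hcon⟩
      rw [← hA]; exact hcon

lemma det_tilC_eq (u v y : Vert d) (A : Set (Vert d)) :
    Det (meets A) {ω : Config d | tilC ω u v y = A} := by
  apply det_of
  intro ω ω' hag hω
  have hω' : tilC ω u v y = A := hω
  show tilC ω' u v y = A
  apply Set.Subset.antisymm
  · intro z hz
    exact (tilC_reach_subset hω' hag z hz).1
  · intro z hz
    have hz' : z ∈ tilC ω u v y := by rw [hω']; exact hz
    exact tilC_subset_of_agree hω' hag z hz'

lemma det_Eon (A : Set (Vert d)) (E : Set (Config d)) :
    Det (meets A) ((fun ω : Config d => restrictConfig ω A) ⁻¹' E) := by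
  intro ω ω' hag
  have hre : restrictConfig ω A = restrictConfig ω' A := by
    apply restrict_eq_of_agree
    intro e he
    apply hag
    induction e using Sym2.ind with
    | _ a b => exact ⟨a, Sym2.mem_mk_left a b, he a (Sym2.mem_mk_left a b)⟩
  show restrictConfig ω A ∈ E ↔ restrictConfig ω' A ∈ E
  rw [hre]

lemma det_Foff (A : Set (Vert d)) (F : Set (Config d)) :
    Det (meets A)ᶜ ((fun ω : Config d => restrictConfig ω Aᶜ) ⁻¹' F) := by
  intro ω ω' hag
  have hre : restrictConfig ω Aᶜ = restrictConfig ω' Aᶜ := by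
    apply restrict_eq_of_agree
    intro e he
    apply hag
    rintro ⟨z, hz, hzA⟩
    exact he z hz hzA
  show restrictConfig ω Aᶜ ∈ F ↔ restrictConfig ω' Aᶜ ∈ F
  rw [hre]

/-! #### Measurability -/

lemma measurable_closeEdge_app (e₀ e : Edge d) :
    Measurable fun ω : Config d => closeEdge ω e₀ e := by
  unfold closeEdge
  rcases eq_or_ne e e₀ with rfl | h
  · simp only [Function.update_self]; exact measurable_const
  · simp only [Function.update_of_ne h]; exact measurable_pi_apply e

lemma measurableSet_chainConn (g : Config d → Config d)
    (hg : ∀ e : Edge d, Measurable fun ω => g ω e) (a b : Vert d) :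
    MeasurableSet {ω : Config d | Connected (g ω) a b} := by
  classical
  have key : ∀ (l : List (Vert d)) (a : Vert d),
      MeasurableSet {ω : Config d | List.Chain (openStep (g ω)) a l} := by
    intro l
    induction l with
    | nil =>
        intro a
        have : {ω : Config d | List.Chain (openStep (g ω)) a []} = Set.univ := by
          ext ω; simp [List.Chain]
        rw [this]; exact MeasurableSet.univ
    | cons c l ih =>
        intro a
        have hrw : {ω : Config d | List.Chain (openStep (g ω)) a (c :: l)} =
            {ω : Config d | openStep (g ω) a c} ∩
              {ω : Config d | List.Chain (openStep (g ω)) c l} := by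
          ext ω; simp [List.Chain, List.isChain_cons_cons]
        rw [hrw]
        refine MeasurableSet.inter ?_ (ih c)
        by_cases hac : a = c
        · have : {ω : Config d | openStep (g ω) a c} = ∅ := by
            ext ω; simp [openStep, hac]
          rw [this]; exact MeasurableSet.empty
        · have : {ω : Config d | openStep (g ω) a c} = (fun ω => g ω s(a, c)) ⁻¹' {true} := by
            ext ω; simp [openStep, hac]
          rw [this]; exact (hg _) (measurableSet_singleton _)
  have hrep : {ω : Config d | Connected (g ω) a b} =
      ⋃ (l : List (Vert d)) (_ : (a :: l).getLast (List.cons_ne_nil a l) = b),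
        {ω : Config d | List.Chain (openStep (g ω)) a l} := by
    ext ω
    simp only [Set.mem_setOf_eq, Set.mem_iUnion]
    constructor
    · intro h
      obtain ⟨l, hl, hlast⟩ := List.exists_isChain_cons_of_relationReflTransGen h
      exact ⟨l, hlast, hl⟩
    · rintro ⟨l, hlast, hl⟩
      exact List.relationReflTransGen_of_exists_isChain_cons l hl hlast
  rw [hrep]
  exact MeasurableSet.iUnion fun l => MeasurableSet.iUnion fun _ => key l a

lemma measurableSet_connected (a b : Vert d) :
    MeasurableSet {ω : Config d | Connected ω a b} :=
  measurableSet_chainConn id (fun e => measurable_pi_apply e) a b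

lemma measurableSet_tilC_eq (u v y : Vert d) (A : Finset (Vert d)) :
    MeasurableSet {ω : Config d | tilC ω u v y = ↑A} := by
  have hrep : {ω : Config d | tilC ω u v y = ↑A} =
      (⋂ z ∈ A, {ω : Config d | Connected (closeEdge ω s(u,v)) y z}) ∩
        ⋂ (z : Vert d) (_ : z ∉ A), {ω : Config d | Connected (closeEdge ω s(u,v)) y z}ᶜ := by
    ext ω
    simp only [Set.mem_setOf_eq, Set.mem_inter_iff, Set.mem_iInter, Set.mem_compl_iff]
    constructor
    · intro h
      constructor
      · intro z hz
        have : z ∈ tilC ω u v y := by rw [h]; exact Finset.mem_coe.2 hz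
        exact this
      · intro z hz hconn
        have : z ∈ tilC ω u v y := hconn
        rw [h] at this
        exact hz (Finset.mem_coe.1 this)
    · rintro ⟨h1, h2⟩
      apply Set.Subset.antisymm
      · intro z hz
        by_contra hzA
        exact h2 z (fun hmem => hzA (Finset.mem_coe.2 hmem)) hz
      · intro z hz
        exact h1 z (Finset.mem_coe.1 hz)
  rw [hrep]
  have hconn : ∀ z : Vert d,
      MeasurableSet {ω : Config d | Connected (closeEdge ω s(u,v)) y z} := fun z =>
    measurableSet_chainConn (fun ω => closeEdge ω s(u,v))
      (fun e => measurable_closeEdge_app _ e) y z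
  exact (MeasurableSet.biInter A.countable_toSet fun z _ => hconn z).inter
    (MeasurableSet.iInter fun z => MeasurableSet.iInter fun _ => (hconn z).compl)

lemma measurableSet_clusterInf (y : Vert d) :
    MeasurableSet {ω : Config d | (cluster ω y).Infinite} := by
  have hrep : {ω : Config d | (cluster ω y).Infinite} =
      ⋂ Fs : Finset (Vert d), ⋃ (z : Vert d) (_ : z ∉ Fs),
        {ω : Config d | Connected ω y z} := by
    ext ω
    simp only [Set.mem_setOf_eq, Set.mem_iInter, Set.mem_iUnion]
    constructor
    · intro h Fs
      obtain ⟨z, hz, hzF⟩ := Set.Infinite.exists_notMem_finset h Fs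
      exact ⟨z, hzF, hz⟩
    · intro h
      intro hfin
      obtain ⟨z, hzF, hconn⟩ := h hfin.toFinset
      exact hzF ((Set.Finite.mem_toFinset _).2 hconn)
  rw [hrep]
  exact MeasurableSet.iInter fun Fs => MeasurableSet.iUnion fun z =>
    MeasurableSet.iUnion fun _ => measurableSet_connected y z

lemma measurableSet_of_det {S : Set (Config d)} (S₀ : Finset (Edge d)) (h : Det ↑S₀ S) :
    MeasurableSet S := by
  classical
  have hrep : S = ⋃ (g : {e : Edge d // e ∈ S₀} → Bool)
      (_ : ∃ ω₀ ∈ S, ∀ e' : {e : Edge d // e ∈ S₀}, ω₀ e'.1 = g e'),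
      {ω : Config d | ∀ e' : {e : Edge d // e ∈ S₀}, ω e'.1 = g e'} := by
    ext ω
    simp only [Set.mem_iUnion, Set.mem_setOf_eq]
    constructor
    · intro hω
      exact ⟨fun e' => ω e'.1, ⟨ω, hω, fun _ => rfl⟩, fun _ => rfl⟩
    · rintro ⟨g, ⟨ω₀, hω₀, hg₀⟩, hg⟩
      refine (h ω₀ ω fun e he => ?_).1 hω₀
      rw [hg₀ ⟨e, Finset.mem_coe.1 he⟩, hg ⟨e, Finset.mem_coe.1 he⟩]
  rw [hrep]
  refine MeasurableSet.iUnion fun g => MeasurableSet.iUnion fun _ => ?_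
  have : {ω : Config d | ∀ e' : {e : Edge d // e ∈ S₀}, ω e'.1 = g e'} =
      ⋂ e' : {e : Edge d // e ∈ S₀}, {ω : Config d | ω e'.1 = g e'} := by
    ext ω; simp
  rw [this]
  refine MeasurableSet.iInter fun e' => ?_
  have hpre : {ω : Config d | ω e'.1 = g e'} =
      (fun ω : Config d => ω e'.1) ⁻¹' {g e'} := rfl
  rw [hpre]
  exact (measurable_pi_apply _) (measurableSet_singleton _)

lemma measurableSet_Eon (A : Finset (Vert d)) (E : Set (Config d)) :
    MeasurableSet ((fun ω : Config d => restrictConfig ω ↑A) ⁻¹' E) := by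
  classical
  apply measurableSet_of_det ((A ×ˢ A).image fun q => s(q.1, q.2))
  intro ω ω' hag
  have hre : restrictConfig ω ↑A = restrictConfig ω' ↑A := by
    apply restrict_eq_of_agree
    intro e he
    apply hag
    refine Finset.mem_coe.2 ?_
    induction e using Sym2.ind with
    | _ a b =>
        refine Finset.mem_image.2 ⟨(a, b), Finset.mem_product.2 ⟨?_, ?_⟩, rfl⟩
        · exact Finset.mem_coe.1 (he a (Sym2.mem_mk_left a b))
        · exact Finset.mem_coe.1 (he b (Sym2.mem_mk_right a b))
  show restrictConfig ω ↑A ∈ E ↔ restrictConfig ω' ↑A ∈ E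
  rw [hre]

/-! #### Cylinder events and the generated σ-algebra -/

def cyl (S : Finset (Edge d)) (f : Edge d → Bool) : Set (Config d) :=
  {ω | ∀ e ∈ S, ω e = f e}

lemma measurableSet_cyl (S : Finset (Edge d)) (f : Edge d → Bool) :
    MeasurableSet (cyl S f) := by
  have : cyl S f = ⋂ e ∈ S, {ω : Config d | ω e = f e} := by ext ω; simp [cyl]
  rw [this]
  refine MeasurableSet.biInter S.countable_toSet fun e _ => ?_
  have hpre : {ω : Config d | ω e = f e} = (fun ω : Config d => ω e) ⁻¹' {f e} := rfl
  rw [hpre]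
  exact (measurable_pi_apply _) (measurableSet_singleton _)

def cylSet (B : Set (Edge d)) : Set (Set (Config d)) :=
  {T | ∃ S : Finset (Edge d), ↑S ⊆ B ∧ ∃ f : Edge d → Bool, T = cyl S f}

lemma isPiSystem_cylSet (B : Set (Edge d)) : IsPiSystem (cylSet B) := by
  classical
  rintro T₁ ⟨S₁, hS₁, f₁, rfl⟩ T₂ ⟨S₂, hS₂, f₂, rfl⟩ hne
  obtain ⟨ω₀, h₀⟩ := hne
  refine ⟨S₁ ∪ S₂, ?_, fun e => if e ∈ S₁ then f₁ e else f₂ e, ?_⟩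
  · rw [Finset.coe_union]; exact Set.union_subset hS₁ hS₂
  · ext ω
    simp only [cyl, Set.mem_inter_iff, Set.mem_setOf_eq, Finset.mem_union]
    constructor
    · rintro ⟨ha, hb⟩ e he
      by_cases h1 : e ∈ S₁
      · rw [if_pos h1]; exact ha e h1
      · rw [if_neg h1]; exact hb e (he.resolve_left h1)
    · intro h
      refine ⟨fun e he => ?_, fun e he => ?_⟩
      · have := h e (Or.inl he); rwa [if_pos he] at this
      · by_cases h1 : e ∈ S₁
        · have hh := h e (Or.inl h1)
          rw [if_pos h1] at hh
          have h01 : ω₀ e = f₁ e := h₀.1 e h1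
          have h02 : ω₀ e = f₂ e := h₀.2 e he
          rw [hh, ← h01, h02]
        · have := h e (Or.inr he); rwa [if_neg h1] at this

lemma measurable_eval_generate (B : Set (Edge d)) (e : Edge d) (he : e ∈ B) :
    @Measurable (Config d) Bool (MeasurableSpace.generateFrom (cylSet B)) inferInstance
      (fun ω => ω e) := by
  letI : MeasurableSpace (Config d) := MeasurableSpace.generateFrom (cylSet B)
  apply measurable_to_countable'
  intro b
  apply measurableSet_generateFrom
  refine ⟨{e}, by simpa using he, fun _ => b, ?_⟩
  ext ω; simp [cyl]

lemma generateFrom_cylSet_univ :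
    (inferInstance : MeasurableSpace (Config d)) =
      MeasurableSpace.generateFrom (cylSet (Set.univ : Set (Edge d))) := by
  refine le_antisymm ?_ (MeasurableSpace.generateFrom_le ?_)
  · have h : @Measurable (Config d) (Config d)
        (MeasurableSpace.generateFrom (cylSet (Set.univ : Set (Edge d)))) inferInstance id := by
      letI : MeasurableSpace (Config d) :=
        MeasurableSpace.generateFrom (cylSet (Set.univ : Set (Edge d)))
      apply measurable_pi_lambda
      intro e
      exact measurable_eval_generate Set.univ e (Set.mem_univ e)
    have h2 := h.comap_le
    rwa [MeasurableSpace.comap_id] at h2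
  · rintro T ⟨S, -, f, rfl⟩
    exact measurableSet_cyl S f

lemma comap_proj (B : Set (Edge d)) :
    MeasurableSpace.comap (fun (ω : Config d) (e' : {e : Edge d // e ∈ B}) => ω e'.1)
        inferInstance = MeasurableSpace.generateFrom (cylSet B) := by
  apply le_antisymm
  · refine Measurable.comap_le ?_
    letI : MeasurableSpace (Config d) := MeasurableSpace.generateFrom (cylSet B)
    apply measurable_pi_lambda
    intro e'
    exact measurable_eval_generate B e'.1 e'.2
  · refine MeasurableSpace.generateFrom_le ?_
    rintro T ⟨S, hS, f, rfl⟩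
    refine ⟨{g : {e : Edge d // e ∈ B} → Bool |
        ∀ e' : {e : Edge d // e ∈ B}, e'.1 ∈ S → g e' = f e'.1}, ?_, ?_⟩
    · have hrw : {g : {e : Edge d // e ∈ B} → Bool |
          ∀ e' : {e : Edge d // e ∈ B}, e'.1 ∈ S → g e' = f e'.1} =
          ⋂ e' : {e : Edge d // e ∈ B}, {g | e'.1 ∈ S → g e' = f e'.1} := by
        ext g; simp
      rw [hrw]
      refine MeasurableSet.iInter fun e' => ?_
      by_cases he' : e'.1 ∈ S
      · have : {g : {e : Edge d // e ∈ B} → Bool | e'.1 ∈ S → g e' = f e'.1} =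
            (fun g : {e : Edge d // e ∈ B} → Bool => g e') ⁻¹' {f e'.1} := by
          ext g; simp [he']
        rw [this]
        exact (measurable_pi_apply e') (measurableSet_singleton _)
      · have : {g : {e : Edge d // e ∈ B} → Bool | e'.1 ∈ S → g e' = f e'.1} = Set.univ := by
          ext g; simp [he']
        rw [this]; exact MeasurableSet.univ
    · ext ω
      simp only [cyl, Set.mem_preimage, Set.mem_setOf_eq]
      constructor
      · intro h e he
        exact h ⟨e, hS (Finset.mem_coe.2 he)⟩ he
      · intro h e' he'
        exact h e'.1 he'

/-! #### Independence over disjoint bond sets -/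

lemma meas_cyl (M : Model d) (p : ℝ) (hp0 : 0 ≤ p) (hp1 : ∀ x, p * M.D x ≤ 1)
    (S : Finset (Edge d)) (f : Edge d → Bool) :
    M.P p (cyl S f) =
      ∏ e ∈ S, ENNReal.ofReal (if f e then p * edgeProb M.D e else 1 - p * edgeProb M.D e) :=
  M.P_cylinder p hp0 hp1 S f

lemma measure_inter_block (M : Model d) (p : ℝ) (hp0 : 0 ≤ p) (hp1 : ∀ x, p * M.D x ≤ 1)
    (B : Set (Edge d)) {S₁ S₂ : Set (Config d)} (h₁ : Det B S₁) (h₂ : Det Bᶜ S₂) :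
    M.P p (S₁ ∩ S₂) = M.P p S₁ * M.P p S₂ := by
  classical
  haveI := M.P_prob p
  set μ := M.P p with hμdef
  -- independence of the cylinder π-systems
  have hind : ProbabilityTheory.IndepSets (cylSet B) (cylSet Bᶜ) μ := by
    rw [ProbabilityTheory.IndepSets_iff]
    rintro T₁ T₂ ⟨S₁f, hS₁, f₁, rfl⟩ ⟨S₂f, hS₂, f₂, rfl⟩
    have hdisj : Disjoint S₁f S₂f := by
      rw [Finset.disjoint_left]
      intro e he1 he2
      exact hS₂ (Finset.mem_coe.2 he2) (hS₁ (Finset.mem_coe.2 he1))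
    have hunion : cyl S₁f f₁ ∩ cyl S₂f f₂ =
        cyl (S₁f ∪ S₂f) fun e => if e ∈ S₁f then f₁ e else f₂ e := by
      ext ω
      simp only [cyl, Set.mem_inter_iff, Set.mem_setOf_eq, Finset.mem_union]
      constructor
      · rintro ⟨ha, hb⟩ e he
        by_cases h1 : e ∈ S₁f
        · rw [if_pos h1]; exact ha e h1
        · rw [if_neg h1]; exact hb e (he.resolve_left h1)
      · intro h
        refine ⟨fun e he => ?_, fun e he => ?_⟩
        · have := h e (Or.inl he); rwa [if_pos he] at this
        · have := h e (Or.inr he)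
          rwa [if_neg (Finset.disjoint_right.1 hdisj he)] at this
    rw [hunion, meas_cyl M p hp0 hp1, meas_cyl M p hp0 hp1, meas_cyl M p hp0 hp1,
      Finset.prod_union hdisj]
    congr 1
    · exact Finset.prod_congr rfl fun e he => by rw [if_pos he]
    · exact Finset.prod_congr rfl fun e he =>
        by rw [if_neg (Finset.disjoint_right.1 hdisj he)]
  have hle1 : MeasurableSpace.generateFrom (cylSet B) ≤
      (inferInstance : MeasurableSpace (Config d)) :=
    MeasurableSpace.generateFrom_le fun T hT => by
      obtain ⟨S, -, f, rfl⟩ := hT; exact measurableSet_cyl S f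
  have hle2 : MeasurableSpace.generateFrom (cylSet Bᶜ) ≤
      (inferInstance : MeasurableSpace (Config d)) :=
    MeasurableSpace.generateFrom_le fun T hT => by
      obtain ⟨S, -, f, rfl⟩ := hT; exact measurableSet_cyl S f
  have hIndep : ProbabilityTheory.Indep (MeasurableSpace.generateFrom (cylSet B))
      (MeasurableSpace.generateFrom (cylSet Bᶜ)) μ :=
    ProbabilityTheory.IndepSets.indep hle1 hle2 (isPiSystem_cylSet B) (isPiSystem_cylSet Bᶜ)
      rfl rfl hind
  have hrule := (ProbabilityTheory.Indep_iff _ _ μ).1 hIndep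
  -- block projections
  set π₁ : Config d → ({e : Edge d // e ∈ B} → Bool) := fun ω e' => ω e'.1 with hπ₁def
  set π₂ : Config d → ({e : Edge d // e ∈ Bᶜ} → Bool) := fun ω e' => ω e'.1 with hπ₂def
  have hm1 : Measurable π₁ := measurable_pi_lambda _ fun e' => measurable_pi_apply e'.1
  have hm2 : Measurable π₂ := measurable_pi_lambda _ fun e' => measurable_pi_apply e'.1
  set s₁ : Set ({e : Edge d // e ∈ B} → Bool) := π₁ '' S₁ with hs₁def
  set s₂ : Set ({e : Edge d // e ∈ Bᶜ} → Bool) := π₂ '' S₂ with hs₂def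
  have hS1 : S₁ = π₁ ⁻¹' s₁ := by
    apply Set.Subset.antisymm (Set.subset_preimage_image _ _)
    rintro ω ⟨ω₀, hω₀, hproj⟩
    exact (h₁ ω₀ ω fun e he => congrFun hproj ⟨e, he⟩).1 hω₀
  have hS2 : S₂ = π₂ ⁻¹' s₂ := by
    apply Set.Subset.antisymm (Set.subset_preimage_image _ _)
    rintro ω ⟨ω₀, hω₀, hproj⟩
    exact (h₂ ω₀ ω fun e he => congrFun hproj ⟨e, he⟩).1 hω₀
  haveI : IsProbabilityMeasure (μ.map π₁) := Measure.isProbabilityMeasure_map hm1.aemeasurable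
  haveI : IsProbabilityMeasure (μ.map π₂) := Measure.isProbabilityMeasure_map hm2.aemeasurable
  set eqv : Config d ≃ᵐ (({e : Edge d // e ∈ B} → Bool) × ({e : Edge d // e ∈ Bᶜ} → Bool)) :=
    MeasurableEquiv.piEquivPiSubtypeProd (fun _ : Edge d => Bool) (fun e => e ∈ B) with heqvdef
  have hcomp : ∀ (sA : Set ({e : Edge d // e ∈ B} → Bool))
      (sB : Set ({e : Edge d // e ∈ Bᶜ} → Bool)),
      ⇑eqv ⁻¹' (sA ×ˢ sB) = π₁ ⁻¹' sA ∩ π₂ ⁻¹' sB := fun sA sB => rfl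
  have hprod : (μ.map π₁).prod (μ.map π₂) = μ.map (⇑eqv) := by
    apply MeasureTheory.Measure.prod_eq
    intro s t hs ht
    rw [MeasurableEquiv.map_apply, hcomp s t, hrule (π₁ ⁻¹' s) (π₂ ⁻¹' t) ?_ ?_,
      Measure.map_apply hm1 hs, Measure.map_apply hm2 ht]
    · rw [← comap_proj B]; exact ⟨s, hs, rfl⟩
    · rw [← comap_proj Bᶜ]; exact ⟨t, ht, rfl⟩
  have hinter : μ (S₁ ∩ S₂) = (μ.map π₁) s₁ * (μ.map π₂) s₂ := by
    have : S₁ ∩ S₂ = ⇑eqv ⁻¹' (s₁ ×ˢ s₂) := by rw [hcomp s₁ s₂, hS1, hS2]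
    rw [this, ← MeasurableEquiv.map_apply, ← hprod, Measure.prod_prod]
  have hfst : μ S₁ = (μ.map π₁) s₁ := by
    have : S₁ = ⇑eqv ⁻¹' (s₁ ×ˢ (Set.univ : Set ({e : Edge d // e ∈ Bᶜ} → Bool))) := by
      rw [hcomp s₁ Set.univ, Set.preimage_univ, Set.inter_univ, hS1]
    rw [this, ← MeasurableEquiv.map_apply, ← hprod, Measure.prod_prod, measure_univ, mul_one]
  have hsnd : μ S₂ = (μ.map π₂) s₂ := by
    have : S₂ = ⇑eqv ⁻¹' ((Set.univ : Set ({e : Edge d // e ∈ B} → Bool)) ×ˢ s₂) := by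
      rw [hcomp Set.univ s₂, Set.preimage_univ, Set.univ_inter, hS2]
    rw [this, ← MeasurableEquiv.map_apply, ← hprod, Measure.prod_prod, measure_univ, one_mul]
  rw [hinter, hfst, hsnd]

/-! #### Translation invariance -/

def shiftC (w : Vert d) (ω : Config d) : Config d := fun e => ω (Sym2.map (· + w) e)

lemma measurable_shiftC (w : Vert d) : Measurable (shiftC w) :=
  measurable_pi_lambda _ fun e => measurable_pi_apply _

lemma shift_leftinv (w : Vert d) (e : Edge d) :
    Sym2.map (· - w) (Sym2.map (· + w) e) = e := by
  rw [Sym2.map_map, show ((fun z : Vert d => z - w) ∘ fun z : Vert d => z + w) = id from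
    funext fun z => by simp, Sym2.map_id, id_eq]

lemma shift_inj (w : Vert d) : Function.Injective (Sym2.map (· + w) : Edge d → Edge d) :=
  Function.LeftInverse.injective (g := Sym2.map (· - w)) (shift_leftinv w)

lemma edgeProb_shift (D : Vert d → ℝ) (w : Vert d) (e : Edge d) :
    edgeProb D (Sym2.map (· + w) e) = edgeProb D e := by
  induction e using Sym2.ind with
  | _ a b =>
      rw [Sym2.map_pair_eq]
      show symD D (a + w) (b + w) = symD D a b
      unfold symD
      have h1 : a + w - (b + w) = a - b := by abel
      have h2 : b + w - (a + w) = b - a := by abel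
      rw [h1, h2]

lemma map_shiftC (M : Model d) (p : ℝ) (hp0 : 0 ≤ p) (hp1 : ∀ x, p * M.D x ≤ 1) (w : Vert d) :
    (M.P p).map (shiftC w) = M.P p := by
  classical
  haveI := M.P_prob p
  haveI : IsProbabilityMeasure ((M.P p).map (shiftC w)) :=
    Measure.isProbabilityMeasure_map (measurable_shiftC w).aemeasurable
  refine MeasureTheory.ext_of_generate_finite (cylSet (Set.univ : Set (Edge d)))
    generateFrom_cylSet_univ (isPiSystem_cylSet Set.univ) ?_ (by simp)
  rintro T ⟨S, -, f, rfl⟩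
  rw [Measure.map_apply (measurable_shiftC w) (measurableSet_cyl S f)]
  have hpre : shiftC w ⁻¹' cyl S f =
      cyl (S.image (Sym2.map (· + w))) (fun e => f (Sym2.map (· - w) e)) := by
    ext ω
    simp only [cyl, Set.mem_preimage, Set.mem_setOf_eq, Finset.mem_image]
    constructor
    · rintro h e' ⟨e, he, rfl⟩
      rw [shift_leftinv]
      exact h e he
    · intro h e he
      have := h (Sym2.map (· + w) e) ⟨e, he, rfl⟩
      rwa [shift_leftinv] at this
  rw [hpre, meas_cyl M p hp0 hp1, meas_cyl M p hp0 hp1,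
    Finset.prod_image (fun e _ e' _ h => shift_inj w h)]
  refine Finset.prod_congr rfl fun e he => ?_
  rw [shift_leftinv, edgeProb_shift]

lemma connected_shiftC (w : Vert d) (ω : Config d) (a b : Vert d) :
    Connected (shiftC w ω) a b ↔ Connected ω (a + w) (b + w) := by
  have hedge : ∀ x z : Vert d, shiftC w ω s(x, z) = ω s(x + w, z + w) := by
    intro x z
    show ω (Sym2.map (· + w) s(x, z)) = ω s(x + w, z + w)
    rw [Sym2.map_pair_eq]
  constructor
  · intro h
    refine Relation.ReflTransGen.lift (fun z => z + w) ?_ _ _ h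
    rintro x z ⟨hxz, hopen⟩
    show openStep ω (x + w) (z + w)
    refine ⟨fun hc => hxz (add_left_injective w hc), ?_⟩
    rwa [hedge] at hopen
  · intro h
    have hlift : Relation.ReflTransGen (openStep (shiftC w ω)) (a + w - w) (b + w - w) := by
      refine Relation.ReflTransGen.lift (fun z => z - w) ?_ _ _ h
      rintro x z ⟨hne, hopen⟩
      show openStep (shiftC w ω) (x - w) (z - w)
      refine ⟨fun hc => hne (by simpa using congrArg (· + w) hc), ?_⟩
      rw [hedge]
      simpa [sub_add_cancel] using hopen
    simpa [Connected] using hlift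

lemma clusterInf_shiftC (w : Vert d) (ω : Config d) :
    (cluster (shiftC w ω) 0).Infinite ↔ (cluster ω w).Infinite := by
  have himg : cluster ω w = (fun z => z + w) '' cluster (shiftC w ω) 0 := by
    ext z'
    simp only [cluster, Set.mem_setOf_eq, Set.mem_image]
    constructor
    · intro h
      refine ⟨z' - w, ?_, by simp⟩
      rw [connected_shiftC, zero_add]
      simpa [sub_add_cancel] using h
    · rintro ⟨z, hz, rfl⟩
      rw [connected_shiftC, zero_add] at hz
      exact hz
  constructor
  · intro h
    rw [himg]
    exact (Set.infinite_image_iff ((add_left_injective w).injOn)).2 h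
  · intro h
    rw [himg] at h
    exact h.of_image _

lemma cluster_null (M : Model d) (p : ℝ) (hp0 : 0 ≤ p) (hp1 : ∀ x, p * M.D x ≤ 1)
    (htheta : M.P p {ω | (cluster ω 0).Infinite} = 0) (w : Vert d) :
    M.P p {ω : Config d | (cluster ω w).Infinite} = 0 := by
  have hset : {ω : Config d | (cluster ω w).Infinite} =
      shiftC w ⁻¹' {ω : Config d | (cluster ω 0).Infinite} := by
    ext ω
    simp only [Set.mem_preimage, Set.mem_setOf_eq]
    exact (clusterInf_shiftC w ω).symm
  rw [hset, ← Measure.map_apply (measurable_shiftC w) (measurableSet_clusterInf 0),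
    map_shiftC M p hp0 hp1 w, htheta]

/-! #### Deterministic lemmas for the second part -/

lemma tilC_restrict_superset {u v y : Vert d} (ω : Config d) :
    ∀ z, Connected (closeEdge ω s(u,v)) y z →
      Connected (closeEdge (restrictConfig ω (tilC ω u v y)) s(u,v)) y z := by
  intro z hz
  induction hz with
  | refl => exact .refl
  | @tail b c hyb hbc ih =>
      obtain ⟨hne, hop⟩ := hbc
      rw [closeEdge_eq_true] at hop
      have hb : b ∈ tilC ω u v y := hyb
      have hc : c ∈ tilC ω u v y := hyb.tail ⟨hne, closeEdge_eq_true.2 hop⟩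
      refine ih.tail ⟨hne, closeEdge_eq_true.2 ⟨hop.1, ?_⟩⟩
      rw [restrictConfig_apply, if_pos]
      · exact hop.2
      · intro z' hz'
        rcases Sym2.mem_iff.1 hz' with rfl | rfl
        · exact hb
        · exact hc

lemma tilC_restrict_subset {u v y : Vert d} (ω : Config d) (A : Set (Vert d)) :
    ∀ z, Connected (closeEdge (restrictConfig ω A) s(u,v)) y z →
      Connected (closeEdge ω s(u,v)) y z := by
  intro z hz
  refine Connected.mono' (fun e he => ?_) hz
  rw [closeEdge_eq_true] at he ⊢
  refine ⟨he.1, ?_⟩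
  have h2 := he.2
  rw [restrictConfig_apply] at h2
  by_cases hc : ∀ z' ∈ e, z' ∈ A
  · rwa [if_pos hc] at h2
  · rw [if_neg hc] at h2
    exact absurd h2 (by simp)

end FactorizationAux

/-! #### Partition lemmas and the events of the factorization lemma -/

section FactorizationAux2

open Set MeasurableSpace

lemma measure_tsum_partition {α : Type*} [MeasurableSpace α] (μ : MeasureTheory.Measure α)
    {ι : Type*} [Countable ι] {G : ι → Set α} (hGmeas : ∀ i, MeasurableSet (G i))
    (hGdisj : Pairwise (Function.onFun Disjoint G)) (hN : μ ((⋃ i, G i)ᶜ) = 0)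
    (S : Set α) : μ S = ∑' i, μ (S ∩ G i) := by
  apply le_antisymm
  · have hcover : S ⊆ (⋃ i, S ∩ G i) ∪ (⋃ i, G i)ᶜ := by
      intro x hx
      by_cases h : x ∈ ⋃ i, G i
      · obtain ⟨i, hi⟩ := Set.mem_iUnion.1 h
        exact Or.inl (Set.mem_iUnion.2 ⟨i, hx, hi⟩)
      · exact Or.inr h
    calc μ S ≤ μ ((⋃ i, S ∩ G i) ∪ (⋃ i, G i)ᶜ) := measure_mono hcover
      _ ≤ μ (⋃ i, S ∩ G i) + μ ((⋃ i, G i)ᶜ) := measure_union_le _ _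
      _ ≤ (∑' i, μ (S ∩ G i)) + 0 := add_le_add (measure_iUnion_le _) hN.le
      _ = ∑' i, μ (S ∩ G i) := add_zero _
  · obtain ⟨T, hST, hTmeas, hTμ⟩ := exists_measurable_superset μ S
    calc (∑' i, μ (S ∩ G i)) ≤ ∑' i, μ (T ∩ G i) :=
          ENNReal.tsum_le_tsum fun i => measure_mono (Set.inter_subset_inter_left _ hST)
      _ = μ (⋃ i, T ∩ G i) := (measure_iUnion
          (fun i j h => (hGdisj h).mono Set.inter_subset_right Set.inter_subset_right)
          fun i => hTmeas.inter (hGmeas i)).symm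
      _ ≤ μ T := measure_mono (Set.iUnion_subset fun i => Set.inter_subset_left)
      _ = μ S := hTμ

lemma lintegral_tsum_partition {α : Type*} [MeasurableSpace α] (μ : MeasureTheory.Measure α)
    {ι : Type*} [Countable ι] {G : ι → Set α} (hGmeas : ∀ i, MeasurableSet (G i))
    (hGdisj : Pairwise (Function.onFun Disjoint G)) (hN : μ ((⋃ i, G i)ᶜ) = 0)
    (f : α → ℝ≥0∞) : ∫⁻ x, f x ∂μ = ∑' i, ∫⁻ x, f x ∂ μ.restrict (G i) := by
  have hμsplit : μ = MeasureTheory.Measure.sum (fun i => μ.restrict (G i)) +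
      μ.restrict ((⋃ i, G i)ᶜ) := by
    rw [← Measure.restrict_iUnion hGdisj hGmeas,
      Measure.restrict_add_restrict_compl (MeasurableSet.iUnion hGmeas)]
  have h2 : ∫⁻ x, f x ∂ μ.restrict ((⋃ i, G i)ᶜ) = 0 := by
    have hle : ∫⁻ x, f x ∂ μ.restrict ((⋃ i, G i)ᶜ) ≤
        ∫⁻ _, (⊤ : ℝ≥0∞) ∂ μ.restrict ((⋃ i, G i)ᶜ) := lintegral_mono fun x => le_top
    rw [lintegral_const, Measure.restrict_apply_univ, hN, mul_zero] at hle
    exact le_antisymm hle (zero_le)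
  conv_lhs => rw [hμsplit]
  rw [lintegral_add_measure, lintegral_sum_measure, h2, add_zero]

variable {d : ℕ}

/-- The event `{C̃^{(u,v)}(y) = A}`. -/
def GA (u v y : Vert d) (A : Finset (Vert d)) : Set (Config d) := {ω | tilC ω u v y = ↑A}

lemma mem_GA {u v y : Vert d} {A : Finset (Vert d)} {ω : Config d} :
    ω ∈ GA u v y A ↔ tilC ω u v y = ↑A := Iff.rfl

/-- The event `{E on A}`. -/
def EonSet (E : Set (Config d)) (A : Set (Vert d)) : Set (Config d) :=
  (fun ω : Config d => restrictConfig ω A) ⁻¹' E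

/-- The event `{F off A}`. -/
def FoffSet (F : Set (Config d)) (A : Set (Vert d)) : Set (Config d) :=
  (fun ω : Config d => restrictConfig ω Aᶜ) ⁻¹' F

end FactorizationAux2

/-- **Lemma 2.2** (Factorization Lemma). Fix `p ∈ [0, ‖D‖_∞⁻¹]` with
`θ(p) = 0`, a directed bond `(u,v)`, a vertex `y` and events `E, F`. Then
`E_p[1{E on C̃^{(u,v)}(y), F off C̃^{(u,v)}(y)}]
  = E_0[1{E on C̃^{(u,v)}_0(y)} · E_1[1{F off C̃^{(u,v)}_0(y)}]]`,
the inner expectation being over a second, independent configuration with the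
same law. Moreover, when `E ⊆ {u ∈ C̃^{(u,v)}(y)} ∩ {v ∉ C̃^{(u,v)}(y)}`, the
event on the left-hand side is independent of the occupation status of the
bond `(u,v)`. -/
theorem factorization_lemma (d : ℕ) (M : Model d) (p : ℝ)
    (hp0 : 0 ≤ p) (hp1 : ∀ x, p * M.D x ≤ 1)
    (htheta : M.P p {ω | (cluster ω 0).Infinite} = 0)
    (u v y : Vert d) (E F : Set (Config d)) :
    (M.P p {ω | OccursOn E (tilC ω u v y) ω ∧ OccursOff F (tilC ω u v y) ω} =
        ∫⁻ ω₀, ind (OccursOn E (tilC ω₀ u v y) ω₀) *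
          M.P p {ω₁ | OccursOff F (tilC ω₀ u v y) ω₁} ∂ M.P p) ∧
      (E ⊆ {ω | u ∈ tilC ω u v y ∧ v ∉ tilC ω u v y} →
        ∀ (ω : Config d) (bl : Bool),
          Function.update ω s(u, v) bl ∈
              {ω' | OccursOn E (tilC ω' u v y) ω' ∧ OccursOff F (tilC ω' u v y) ω'} ↔
            ω ∈ {ω' | OccursOn E (tilC ω' u v y) ω' ∧ OccursOff F (tilC ω' u v y) ω'}) := by
  constructor
  · -- Part 1: the factorization identity
    classical
    haveI := M.P_prob p
    have hGmeas : ∀ A : Finset (Vert d), MeasurableSet (GA u v y A) := fun A =>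
      measurableSet_tilC_eq u v y A
    have hGdisj : Pairwise (Function.onFun Disjoint (GA u v y)) := by
      intro A A' hne
      show Disjoint (GA u v y A) (GA u v y A')
      rw [Set.disjoint_left]
      intro ω hA hA'
      exact hne (Finset.coe_injective ((mem_GA.1 hA).symm.trans (mem_GA.1 hA')))
    have hEmeas : ∀ A : Finset (Vert d), MeasurableSet (EonSet E (↑A : Set (Vert d))) :=
      fun A => measurableSet_Eon A E
    have hNnull : M.P p ((⋃ A : Finset (Vert d), GA u v y A)ᶜ) = 0 := by
      refine measure_mono_null ?_ (cluster_null M p hp0 hp1 htheta y)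
      intro ω hω
      simp only [Set.mem_compl_iff, Set.mem_iUnion, not_exists] at hω
      show (cluster ω y).Infinite
      intro hfin
      have htfin : (tilC ω u v y).Finite := hfin.subset fun z hz =>
        Connected.mono' (fun e he => (closeEdge_eq_true.1 he).2) hz
      exact hω htfin.toFinset (mem_GA.2 (Set.Finite.coe_toFinset htfin).symm)
    have hSA : ∀ A : Finset (Vert d),
        {ω | OccursOn E (tilC ω u v y) ω ∧ OccursOff F (tilC ω u v y) ω} ∩ GA u v y A =
          (GA u v y A ∩ EonSet E (↑A : Set (Vert d))) ∩ FoffSet F (↑A : Set (Vert d)) := by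
      intro A
      ext ω
      simp only [Set.mem_inter_iff, Set.mem_setOf_eq]
      constructor
      · rintro ⟨⟨h1, h2⟩, h3⟩
        have h3' : tilC ω u v y = ↑A := mem_GA.1 h3
        refine ⟨⟨h3, ?_⟩, ?_⟩
        · show restrictConfig ω (↑A : Set (Vert d)) ∈ E
          rw [← h3']; exact h1
        · show restrictConfig ω (↑A : Set (Vert d))ᶜ ∈ F
          rw [← h3']; exact h2
      · rintro ⟨⟨h3, h1⟩, h2⟩
        have h3' : tilC ω u v y = ↑A := mem_GA.1 h3
        refine ⟨⟨?_, ?_⟩, h3⟩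
        · show restrictConfig ω (tilC ω u v y) ∈ E
          rw [h3']; exact h1
        · show restrictConfig ω (tilC ω u v y)ᶜ ∈ F
          rw [h3']; exact h2
    have hkey : ∀ A : Finset (Vert d),
        M.P p ((GA u v y A ∩ EonSet E (↑A : Set (Vert d))) ∩ FoffSet F (↑A : Set (Vert d))) =
          M.P p (GA u v y A ∩ EonSet E (↑A : Set (Vert d))) *
            M.P p (FoffSet F (↑A : Set (Vert d))) := by
      intro A
      refine measure_inter_block M p hp0 hp1 (meets (↑A : Set (Vert d))) ?_ ?_
      · exact (det_tilC_eq u v y (↑A : Set (Vert d))).inter (det_Eon (↑A : Set (Vert d)) E)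
      · exact det_Foff (↑A : Set (Vert d)) F
    obtain ⟨f, hfdef⟩ : ∃ f : Config d → ℝ≥0∞, f = fun ω₀ =>
        ind (OccursOn E (tilC ω₀ u v y) ω₀) *
          M.P p {ω₁ | OccursOff F (tilC ω₀ u v y) ω₁} := ⟨_, rfl⟩
    have hfapp : ∀ ω₀ : Config d, f ω₀ = ind (OccursOn E (tilC ω₀ u v y) ω₀) *
        M.P p {ω₁ | OccursOff F (tilC ω₀ u v y) ω₁} := fun ω₀ => by rw [hfdef]
    have hperA : ∀ A : Finset (Vert d),
        (∫⁻ ω₀, f ω₀ ∂ (M.P p).restrict (GA u v y A)) =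
          M.P p (FoffSet F (↑A : Set (Vert d))) *
            M.P p (EonSet E (↑A : Set (Vert d)) ∩ GA u v y A) := by
      intro A
      have hfg : ∀ ω₀ ∈ GA u v y A, f ω₀ =
          (EonSet E (↑A : Set (Vert d))).indicator
            (fun _ => M.P p (FoffSet F (↑A : Set (Vert d)))) ω₀ := by
        intro ω₀ hω₀
        have htc : tilC ω₀ u v y = ↑A := mem_GA.1 hω₀
        have hsetF : {ω₁ | OccursOff F (tilC ω₀ u v y) ω₁} =
            FoffSet F (↑A : Set (Vert d)) := by
          rw [htc]; rfl
        rw [hfapp ω₀, hsetF]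
        by_cases hEmem : ω₀ ∈ EonSet E (↑A : Set (Vert d))
        · rw [Set.indicator_of_mem hEmem]
          have hOn : OccursOn E (tilC ω₀ u v y) ω₀ := by
            show restrictConfig ω₀ (tilC ω₀ u v y) ∈ E
            rw [htc]; exact hEmem
          simp only [ind, if_pos hOn, one_mul]
        · rw [Set.indicator_of_notMem hEmem]
          have hOn : ¬ OccursOn E (tilC ω₀ u v y) ω₀ := by
            intro hOn
            apply hEmem
            show restrictConfig ω₀ (↑A : Set (Vert d)) ∈ E
            rw [← htc]; exact hOn
          simp only [ind, if_neg hOn, zero_mul]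
      calc (∫⁻ ω₀, f ω₀ ∂ (M.P p).restrict (GA u v y A))
          = ∫⁻ ω₀ in GA u v y A, (EonSet E (↑A : Set (Vert d))).indicator
              (fun _ => M.P p (FoffSet F (↑A : Set (Vert d)))) ω₀ ∂ M.P p :=
            setLIntegral_congr_fun (hGmeas A) hfg
        _ = ∫⁻ ω₀ in EonSet E (↑A : Set (Vert d)),
              (fun _ : Config d => M.P p (FoffSet F (↑A : Set (Vert d)))) ω₀
              ∂ (M.P p).restrict (GA u v y A) := lintegral_indicator (hEmeas A) _
        _ = M.P p (FoffSet F (↑A : Set (Vert d))) *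
              ((M.P p).restrict (GA u v y A)) (EonSet E (↑A : Set (Vert d))) :=
            setLIntegral_const _ _
        _ = M.P p (FoffSet F (↑A : Set (Vert d))) *
              M.P p (EonSet E (↑A : Set (Vert d)) ∩ GA u v y A) := by
            rw [Measure.restrict_apply (hEmeas A)]
    calc M.P p {ω | OccursOn E (tilC ω u v y) ω ∧ OccursOff F (tilC ω u v y) ω}
        = ∑' A : Finset (Vert d), M.P p ({ω | OccursOn E (tilC ω u v y) ω ∧
            OccursOff F (tilC ω u v y) ω} ∩ GA u v y A) :=
          measure_tsum_partition (M.P p) hGmeas hGdisj hNnull _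
      _ = ∑' A : Finset (Vert d), M.P p (FoffSet F (↑A : Set (Vert d))) *
            M.P p (EonSet E (↑A : Set (Vert d)) ∩ GA u v y A) := by
          refine tsum_congr fun A => ?_
          rw [hSA A, hkey A, mul_comm,
            Set.inter_comm (GA u v y A) (EonSet E (↑A : Set (Vert d)))]
      _ = ∑' A : Finset (Vert d), ∫⁻ ω₀, f ω₀ ∂ (M.P p).restrict (GA u v y A) :=
          tsum_congr fun A => (hperA A).symm
      _ = ∫⁻ ω₀, f ω₀ ∂ M.P p :=
          (lintegral_tsum_partition (M.P p) hGmeas hGdisj hNnull f).symm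
      _ = ∫⁻ ω₀, ind (OccursOn E (tilC ω₀ u v y) ω₀) *
            M.P p {ω₁ | OccursOff F (tilC ω₀ u v y) ω₁} ∂ M.P p := by rw [hfdef]
  · -- Part 2: independence of the bond (u,v)
    intro hE ω bl
    classical
    have hclose : closeEdge (Function.update ω s(u,v) bl) s(u,v) = closeEdge ω s(u,v) := by
      unfold closeEdge
      rw [Function.update_idem]
    have htilC : tilC (Function.update ω s(u,v) bl) u v y = tilC ω u v y := by
      unfold tilC
      rw [hclose]
    simp only [Set.mem_setOf_eq, htilC]
    have hu_mem : u ∈ s(u,v) := Sym2.mem_mk_left u v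
    have hv_mem : v ∈ s(u,v) := Sym2.mem_mk_right u v
    have hupdOn : ¬ (∀ z ∈ s(u,v), z ∈ tilC ω u v y) →
        restrictConfig (Function.update ω s(u,v) bl) (tilC ω u v y) =
          restrictConfig ω (tilC ω u v y) := by
      intro h
      apply restrict_eq_of_agree
      intro e he
      rcases eq_or_ne e s(u,v) with rfl | hne
      · exact absurd he h
      · exact Function.update_of_ne hne bl ω
    have hupdOff : (∃ z ∈ s(u,v), z ∈ tilC ω u v y) →
        restrictConfig (Function.update ω s(u,v) bl) (tilC ω u v y)ᶜ =
          restrictConfig ω (tilC ω u v y)ᶜ := by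
      rintro ⟨z, hz, hzA⟩
      apply restrict_eq_of_agree
      intro e he
      rcases eq_or_ne e s(u,v) with rfl | hne
      · exact absurd hzA (he z hz)
      · exact Function.update_of_ne hne bl ω
    by_cases hvA : v ∈ tilC ω u v y
    · -- `v` lies in the cluster: the `on` event fails on both sides
      have hOnFalse : ∀ ωx : Config d, tilC ωx u v y = tilC ω u v y →
          ¬ OccursOn E (tilC ω u v y) ωx := by
        intro ωx htc hOn
        have hmem : restrictConfig ωx (tilC ω u v y) ∈ E := hOn
        have hsub := hE hmem
        apply hsub.2
        have hvx : v ∈ tilC ωx u v y := by rw [htc]; exact hvA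
        have hconn := tilC_restrict_superset ωx v hvx
        rw [htc] at hconn
        exact hconn
      exact iff_of_false (fun h => hOnFalse _ htilC h.1) (fun h => hOnFalse ω rfl h.1)
    · by_cases huA : u ∈ tilC ω u v y
      · -- `u ∈ A`, `v ∉ A`: both restrictions are unchanged
        have hon := hupdOn (fun hall => hvA (hall v hv_mem))
        have hoff := hupdOff ⟨u, hu_mem, huA⟩
        unfold OccursOn OccursOff
        rw [hon, hoff]
      · -- `u ∉ A`: the `on` event fails on both sides
        have hon := hupdOn (fun hall => hvA (hall v hv_mem))
        have hOnFalse : ¬ OccursOn E (tilC ω u v y) ω := by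
          intro hOn
          have hsub := hE hOn
          exact huA (tilC_restrict_subset ω (tilC ω u v y) u hsub.1)
        have hOnFalse' : ¬ OccursOn E (tilC ω u v y) (Function.update ω s(u,v) bl) := by
          intro hOn
          apply hOnFalse
          show restrictConfig ω (tilC ω u v y) ∈ E
          rw [← hon]; exact hOn
        exact iff_of_false (fun h => hOnFalse' h.1) (fun h => hOnFalse h.1)

end Percolation
end
end

section
/- Cutting-edge partition (Lemma 2.3). For any vertex v ∈ Z^d, any set A ⊆ Z^d, and any r ∈ ℕ, the event {v ↔ Q_r^c through A} is the disjoint union of E''(v,r;A) and, over directed edges b = (b̲,b̄) with b̲ ∈ Q_r, of the events E'(v, b̲; A) ∩ {b is open and pivotal for v ↔ Q_r^c}; that is, {v ↔^A Q_r^c} = E''(v,r;A) ⊍ ⊍_{b∈E_r} [E'(v,b̲;A) ∩ {b open and pivotal for v ↔ Q_r^c}], where the events in the union are pairwise disjoint. -/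
open MeasureTheory Filter
open scoped ENNReal Topology Classical

noncomputable section

namespace Percolation

section CuttingAux

variable {d : ℕ}

lemma conn_mono {ω₁ ω₂ : Config d} (h : ∀ e, ω₁ e = true → ω₂ e = true)
    {x y : Vert d} (hc : Connected ω₁ x y) : Connected ω₂ x y :=
  Relation.ReflTransGen.mono (fun a b (hab : openStep ω₁ a b) => (⟨hab.1, h _ hab.2⟩ : openStep ω₂ a b)) x y hc

lemma conn_symm {ω : Config d} {x y : Vert d} (h : Connected ω x y) : Connected ω y x := by
  have hs : Symmetric (openStep ω) := fun a b hab =>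
    ⟨hab.1.symm, by rw [Sym2.eq_swap]; exact hab.2⟩
  haveI : Std.Symm (openStep ω) := ⟨hs⟩
  exact Std.Symm.symm (r := Relation.ReflTransGen (openStep ω)) _ _ h

lemma closeEdge_apply (ω : Config d) (e f : Edge d) :
    closeEdge ω e f = if f = e then false else ω f := Function.update_apply ω e false f

lemma closeEdge_le (ω : Config d) (e : Edge d) :
    ∀ f, closeEdge ω e f = true → ω f = true := by
  intro f hf
  rw [closeEdge_apply] at hf
  split at hf
  · exact absurd hf (by simp)
  · exact hf

lemma closeEdge_eq_self {ω : Config d} {e : Edge d} (h : ω e = false) :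
    closeEdge ω e = ω := by
  funext f
  rw [closeEdge_apply]
  split
  · rename_i hf; rw [hf, h]
  · rfl

lemma openEdge'_eq_self {ω : Config d} {e : Edge d} (h : ω e = true) :
    openEdge' ω e = ω := by
  funext f
  unfold openEdge'
  rw [Function.update_apply]
  split
  · rename_i hf; rw [hf, h]
  · rfl

lemma closeEdge_mono {ω₁ ω₂ : Config d} (h : ∀ f, ω₁ f = true → ω₂ f = true) (e : Edge d) :
    ∀ f, closeEdge ω₁ e f = true → closeEdge ω₂ e f = true := by
  intro f hf
  rw [closeEdge_apply] at hf ⊢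
  split at hf
  · exact absurd hf (by simp)
  · rename_i hfe; rw [if_neg hfe]; exact h f hf

lemma restrict_le (ω : Config d) (B : Set (Vert d)) :
    ∀ f, restrictConfig ω B f = true → ω f = true := by
  intro f hf
  unfold restrictConfig at hf
  split at hf
  · exact hf
  · exact absurd hf (by simp)

/-- First-use decomposition of an open path with respect to an edge. -/
lemma conn_decomp {ω : Config d} (e : Edge d) {x y : Vert d} (h : Connected ω x y) :
    Connected (closeEdge ω e) x y ∨
      ∃ a b : Vert d, s(a, b) = e ∧ a ≠ b ∧ ω e = true ∧
        Connected (closeEdge ω e) x a ∧ Connected ω b y := by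
  induction h using Relation.ReflTransGen.head_induction_on with
  | refl => exact Or.inl .refl
  | @head a c hstep htail ih =>
    by_cases hac : s(a, c) = e
    · exact Or.inr ⟨a, c, hac, hstep.1, hac ▸ hstep.2, .refl, htail⟩
    · have hstep' : openStep (closeEdge ω e) a c :=
        ⟨hstep.1, by rw [closeEdge_apply, if_neg hac]; exact hstep.2⟩
      rcases ih with h1 | ⟨aa, bb, h2, h3, h4, h5, h6⟩
      · exact Or.inl (Relation.ReflTransGen.head hstep' h1)
      · exact Or.inr ⟨aa, bb, h2, h3, h4, Relation.ReflTransGen.head hstep' h5, h6⟩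

/-- Last-use decomposition of an open path with respect to an edge. -/
lemma conn_decomp' {ω : Config d} (e : Edge d) {x y : Vert d} (h : Connected ω x y) :
    Connected (closeEdge ω e) x y ∨
      ∃ a b : Vert d, s(a, b) = e ∧ a ≠ b ∧ ω e = true ∧
        Connected ω x a ∧ Connected (closeEdge ω e) b y := by
  rcases conn_decomp e (conn_symm h) with h1 | ⟨a, bb, h1, h2, h3, h4, h5⟩
  · exact Or.inl (conn_symm h1)
  · exact Or.inr ⟨bb, a, by rw [← h1]; exact Sym2.eq_swap, h2.symm, h3,
      conn_symm h5, conn_symm h4⟩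

/-- Connectivity in exactly `n` steps. -/
def connN (ω : Config d) : ℕ → Vert d → Vert d → Prop
  | 0, x, y => x = y
  | n + 1, x, y => ∃ m, openStep ω x m ∧ connN ω n m y

lemma connN_conn {ω : Config d} : ∀ {n : ℕ} {x y : Vert d}, connN ω n x y → Connected ω x y
  | 0, _, _, h => h ▸ Relation.ReflTransGen.refl
  | n + 1, _, _, ⟨_, hm, ht⟩ => Relation.ReflTransGen.head hm (connN_conn ht)

lemma conn_connN {ω : Config d} {x y : Vert d} (h : Connected ω x y) :
    ∃ n, connN ω n x y := by
  induction h using Relation.ReflTransGen.head_induction_on with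
  | refl => exact ⟨0, rfl⟩
  | head hstep _ ih =>
    obtain ⟨n, hn⟩ := ih
    exact ⟨n + 1, _, hstep, hn⟩

lemma connN_mono {ω₁ ω₂ : Config d} (h : ∀ f, ω₁ f = true → ω₂ f = true) :
    ∀ {n : ℕ} {x y : Vert d}, connN ω₁ n x y → connN ω₂ n x y
  | 0, _, _, hc => hc
  | n + 1, _, _, ⟨m, hm, ht⟩ => ⟨m, ⟨hm.1, h _ hm.2⟩, connN_mono h ht⟩

lemma connN_decomp {ω : Config d} (e : Edge d) :
    ∀ {n : ℕ} {x y : Vert d}, connN ω n x y →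
      connN (closeEdge ω e) n x y ∨
        ∃ a b k, k < n ∧ s(a, b) = e ∧ connN (closeEdge ω e) k x a ∧ Connected ω b y
  | 0, _, _, h => Or.inl h
  | n + 1, x, y, ⟨m, hm, ht⟩ => by
    by_cases hxm : s(x, m) = e
    · exact Or.inr ⟨x, m, 0, Nat.succ_pos n, hxm, rfl, connN_conn ht⟩
    · have hm' : openStep (closeEdge ω e) x m :=
        ⟨hm.1, by rw [closeEdge_apply, if_neg hxm]; exact hm.2⟩
      rcases connN_decomp e ht with h1 | ⟨a, b, k, hk, h2, h3, h4⟩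
      · exact Or.inl ⟨m, hm', h1⟩
      · exact Or.inr ⟨a, b, k + 1, Nat.succ_lt_succ hk, h2, ⟨m, hm', h3⟩, h4⟩

lemma pivArm_not_conn_far {ω : Config d} {u w v : Vert d} {r : ℝ}
    (h : PivotalArm ω u w v r) : ¬ Connected (closeEdge ω s(u, w)) v w := by
  intro hc
  obtain ⟨y, hy, h2⟩ := h.2.2.2
  exact h.2.1 ⟨y, hy, hc.trans h2⟩

lemma pivArm_ne {ω : Config d} {u w v : Vert d} {r : ℝ}
    (h : PivotalArm ω u w v r) : u ≠ w := by
  rintro rfl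
  exact pivArm_not_conn_far h h.2.2.1

lemma pivArm_bot_le {ω : Config d} {u w v : Vert d} {r : ℝ}
    (h : PivotalArm ω u w v r) : euc u ≤ r :=
  le_of_not_gt fun hr => h.2.1 ⟨u, hr, h.2.2.1⟩

lemma pivArm_open {ω : Config d} {u w v : Vert d} {r : ℝ}
    (harm : Arm ω v r) (h : PivotalArm ω u w v r) : ω s(u, w) = true := by
  cases h' : ω s(u, w) with
  | true => rfl
  | false =>
    have := h.2.1
    rw [closeEdge_eq_self h'] at this
    exact absurd harm this

/-- In the presence of two distinct pivotal bonds, at least one of the two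
"reaches the other's bottom without itself" statements holds. -/
lemma order_total {ω : Config d} {v : Vert d} {r : ℝ} {b b' : Vert d × Vert d}
    (hb : PivotalArm ω b.1 b.2 v r) (hb' : PivotalArm ω b'.1 b'.2 v r) :
    Connected (closeEdge ω s(b'.1, b'.2)) v b.1 ∨
      Connected (closeEdge ω s(b.1, b.2)) v b'.1 := by
  by_contra h
  push_neg at h
  rcases conn_decomp s(b'.1, b'.2) hb.2.2.1 with h1 | ⟨a, bb, haf, _, _, Q, _⟩
  · exact h.1 (conn_mono (closeEdge_mono (closeEdge_le ω _) _) h1)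
  · rcases Sym2.eq_iff.mp haf with ⟨rfl, rfl⟩ | ⟨rfl, rfl⟩
    · exact h.2 (conn_mono (fun f => closeEdge_le _ _ f) Q)
    · exact pivArm_not_conn_far hb'
        (conn_mono (closeEdge_mono (closeEdge_le ω _) _) Q)

/-- Ordering of pivotal bonds: if `v` reaches `b.1` without the bond `b'`,
then `b` is pivotal for the connection `v ↔ b'.1`. -/
lemma order_aux {ω : Config d} {v : Vert d} {r : ℝ} {b b' : Vert d × Vert d}
    (hb : PivotalArm ω b.1 b.2 v r) (hb' : PivotalArm ω b'.1 b'.2 v r)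
    (hob : ω s(b.1, b.2) = true) (hob' : ω s(b'.1, b'.2) = true)
    (hee : s(b.1, b.2) ≠ s(b'.1, b'.2))
    (hA : Connected (closeEdge ω s(b'.1, b'.2)) v b.1) :
    PivotalConn ω b.1 b.2 v b'.1 := by
  set e := s(b.1, b.2) with he
  set e' := s(b'.1, b'.2) with he'
  set c := closeEdge ω e with hc
  set c' := closeEdge ω e' with hc'
  have hce' : ∀ f, closeEdge c e' f = true → c' f = true :=
    closeEdge_mono (closeEdge_le ω e) e'
  have hcc : ∀ f, closeEdge c e' f = true → c f = true := closeEdge_le c e'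
  have hne : b.1 ≠ b.2 := pivArm_ne hb
  have hne' : b'.1 ≠ b'.2 := pivArm_ne hb'
  have hstep' : openStep c' b.1 b.2 :=
    ⟨hne, by rw [hc', closeEdge_apply, if_neg hee]; exact hob⟩
  have hstep : openStep c b'.1 b'.2 :=
    ⟨hne', by rw [hc, closeEdge_apply, if_neg (Ne.symm hee)]; exact hob'⟩
  refine ⟨?_, ?_, hb.2.2.1, ?_⟩
  · rw [openEdge'_eq_self hob]
    exact conn_mono (closeEdge_le ω e') hb'.2.2.1
  · intro h2
    obtain ⟨y, hy, P⟩ := hb.2.2.2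
    rcases conn_decomp e' P with h1 | ⟨a, bb, haf, _, _, Q, T⟩
    · refine hb'.2.1 ⟨y, hy, ?_⟩
      exact ((hA.tail hstep').trans (conn_mono hce' h1))
    · rcases Sym2.eq_iff.mp haf with ⟨rfl, rfl⟩ | ⟨rfl, rfl⟩
      · exact hb.2.1 ⟨y, hy, (h2.tail hstep).trans T⟩
      · exact hb.2.1 ⟨y, hy, h2.trans T⟩
  · obtain ⟨y, hy, P⟩ := hb.2.2.2
    rcases conn_decomp e' P with h1 | ⟨a, bb, haf, _, _, Q, T⟩
    · exact absurd ⟨y, hy, (hA.tail hstep').trans (conn_mono hce' h1)⟩ hb'.2.1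
    · rcases Sym2.eq_iff.mp haf with ⟨rfl, rfl⟩ | ⟨rfl, rfl⟩
      · exact conn_mono hcc Q
      · exact absurd ((hA.tail hstep').trans (conn_mono hce' Q))
          (pivArm_not_conn_far hb')

/-- Any two distinct open pivotal bonds for the arm event are comparable. -/
lemma order_piv {ω : Config d} {v : Vert d} {r : ℝ} {b b' : Vert d × Vert d}
    (hb : PivotalArm ω b.1 b.2 v r) (hb' : PivotalArm ω b'.1 b'.2 v r)
    (hob : ω s(b.1, b.2) = true) (hob' : ω s(b'.1, b'.2) = true)
    (hbne : b ≠ b') :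
    PivotalConn ω b.1 b.2 v b'.1 ∨ PivotalConn ω b'.1 b'.2 v b.1 := by
  by_cases hee : s(b.1, b.2) = s(b'.1, b'.2)
  · exfalso
    rcases Sym2.eq_iff.mp hee with ⟨h1, h2⟩ | ⟨h1, h2⟩
    · exact hbne (Prod.ext h1 h2)
    · apply pivArm_not_conn_far hb
      have h3 := hb'.2.2.1
      rw [← hee, ← h2] at h3
      exact h3
  · rcases order_total hb hb' with hA | hA'
    · exact Or.inl (order_aux hb hb' hob hob' hee hA)
    · exact Or.inr (order_aux hb' hb hob' hob (Ne.symm hee) hA')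

/-- A pivotal bond for the connection to the bottom of a pivotal bond of the
arm is itself (open and) pivotal for the arm. -/
lemma pivotalConn_to_arm {ω : Config d} {v : Vert d} {r : ℝ} {b : Vert d × Vert d}
    (harm : Arm ω v r)
    (hb : PivotalArm ω b.1 b.2 v r) (hob : ω s(b.1, b.2) = true)
    {u w : Vert d} (hp : PivotalConn ω u w v b.1) :
    ω s(u, w) = true ∧ PivotalArm ω u w v r ∧ s(u, w) ≠ s(b.1, b.2) := by
  -- the bond (u,w) is open
  have hof : ω s(u, w) = true := by
    cases h' : ω s(u, w) with
    | true => rfl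
    | false =>
      have h2 := hp.2.1
      rw [closeEdge_eq_self h'] at h2
      exact absurd (conn_mono (closeEdge_le ω s(b.1, b.2)) hb.2.2.1) h2
  -- the two edges differ
  have hef : s(u, w) ≠ s(b.1, b.2) := by
    intro hfe
    apply hp.2.1
    rw [hfe]
    exact hb.2.2.1
  have hne : b.1 ≠ b.2 := pivArm_ne hb
  have hstepf : openStep (closeEdge ω s(u, w)) b.1 b.2 :=
    ⟨hne, by rw [closeEdge_apply, if_neg hef.symm]; exact hob⟩
  -- closing (u,w) kills the arm
  have hnoarm : ¬ Arm (closeEdge ω s(u, w)) v r := by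
    rintro ⟨y, hy, P⟩
    rcases conn_decomp s(b.1, b.2) P with h1 | ⟨a, bb, hae, _, _, Q, T⟩
    · exact hb.2.1 ⟨y, hy, conn_mono
        (closeEdge_mono (closeEdge_le ω s(u, w)) s(b.1, b.2)) h1⟩
    · rcases Sym2.eq_iff.mp hae with ⟨rfl, rfl⟩ | ⟨rfl, rfl⟩
      · exact hp.2.1 (conn_mono (closeEdge_le _ s(b.1, b.2)) Q)
      · exact pivArm_not_conn_far hb
          (conn_mono (closeEdge_mono (closeEdge_le ω s(u, w)) s(b.1, b.2)) Q)
  refine ⟨hof, ⟨?_, hnoarm, hp.2.2.1, ?_⟩, hef⟩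
  · rw [openEdge'_eq_self hof]; exact harm
  · -- w has an arm after closing (u,w)
    obtain ⟨y, hy, P⟩ := hb.2.2.2
    rcases conn_decomp' s(u, w) P with h1 | ⟨a, bb, haf, _, _, Q, T⟩
    · refine ⟨y, hy, ?_⟩
      exact ((hp.2.2.2).tail hstepf).trans
        (conn_mono (closeEdge_mono (closeEdge_le ω s(b.1, b.2)) s(u, w)) h1)
    · rcases Sym2.eq_iff.mp haf with ⟨_, hbb⟩ | ⟨_, hbb⟩
      · rw [hbb] at T
        exact ⟨y, hy, conn_mono
          (closeEdge_mono (closeEdge_le ω s(b.1, b.2)) s(u, w)) T⟩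
      · rw [hbb] at T
        exact absurd ⟨y, hy, hp.2.2.1.trans
          (conn_mono (closeEdge_mono (closeEdge_le ω s(b.1, b.2)) s(u, w)) T)⟩ hnoarm

end CuttingAux

/-- **Lemma 2.3** (Cutting-bond partition). For any vertex `v`, vertex set `A`
and `r ∈ ℕ`, the event `{v ↔ Q_r^c through A}` is the disjoint union of
`E''(v,r;A)` and, over directed bonds `b = (b̲,b̄)` with `b̲ ∈ Q_r`, of the
events `E'(v,b̲;A) ∩ {b open and pivotal for v ↔ Q_r^c}`. -/
theorem cutting_bond_partition (d : ℕ) (v : Vert d) (A : Set (Vert d)) (r : ℕ)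
    (ω : Config d) :
    (ArmThrough ω A v r ↔
        Edprime ω v r A ∨ ∃ b : Vert d × Vert d, CutAt ω v r A b) ∧
      ¬ (Edprime ω v r A ∧ ∃ b : Vert d × Vert d, CutAt ω v r A b) ∧
      ∀ b b' : Vert d × Vert d, CutAt ω v r A b → CutAt ω v r A b' → b = b' := by
  refine ⟨⟨?_, ?_⟩, ?_, ?_⟩
  · -- forward direction of the partition
    intro hAT
    by_cases hE : Edprime ω v r A
    · exact Or.inl hE
    · right
      have hex : ∃ u w : Vert d, PivotalArm ω u w v (r : ℝ) ∧ ConnThrough ω A v u := by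
        have h1 : ¬ ∀ u₁ v₁ : Vert d, PivotalArm ω u₁ v₁ v (r : ℝ) →
            ¬ ConnThrough ω A v u₁ := fun h => hE ⟨hAT, h⟩
        push_neg at h1
        exact h1
      -- the set of candidate cutting bonds, indexed by distance of the bottom
      set Pn : ℕ → Prop := fun n => ∃ b : Vert d × Vert d,
        (ω s(b.1, b.2) = true ∧ PivotalArm ω b.1 b.2 v (r : ℝ) ∧
          ConnThrough ω A v b.1) ∧
        connN (closeEdge ω s(b.1, b.2)) n v b.1 with hPn
      have h0 : ∃ n, Pn n := by
        obtain ⟨u, w, hpiv, hct⟩ := hex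
        obtain ⟨n, hn⟩ := conn_connN hpiv.2.2.1
        exact ⟨n, (u, w), ⟨pivArm_open hAT.1 hpiv, hpiv, hct⟩, hn⟩
      obtain ⟨b, ⟨hob, hpiv, hct⟩, hcn⟩ := Nat.find_spec h0
      refine ⟨b, pivArm_bot_le hpiv, ⟨hct, ?_⟩, hob, hpiv⟩
      -- no earlier pivotal bond is reached through A
      intro u₁ w₁ hpc hct1
      obtain ⟨hou, hpiva, hnef⟩ := pivotalConn_to_arm hAT.1 hpiv hob hpc
      rcases connN_decomp s(u₁, w₁) hcn with h1 | ⟨a, bb, k, hk, haf, Q, T⟩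
      · exact hpc.2.1 (conn_mono
          (closeEdge_mono (closeEdge_le ω s(b.1, b.2)) s(u₁, w₁)) (connN_conn h1))
      · rcases Sym2.eq_iff.mp haf with ⟨ha, _⟩ | ⟨ha, _⟩ <;> rw [ha] at Q
        · refine Nat.find_min h0 hk ⟨(u₁, w₁), ⟨hou, hpiva, hct1⟩, ?_⟩
          exact connN_mono
            (closeEdge_mono (closeEdge_le ω s(b.1, b.2)) s(u₁, w₁)) Q
        · exact hpc.2.1 ((conn_mono
            (closeEdge_mono (closeEdge_le ω s(b.1, b.2)) s(u₁, w₁)) (connN_conn Q)).trans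
            hpc.2.2.2)
  · -- backward direction of the partition
    rintro (hE | ⟨b, hler, hEp, hob, hpiv⟩)
    · exact hE.1
    · constructor
      · rw [← openEdge'_eq_self hob]
        exact hpiv.1
      · rintro ⟨y, hy, P⟩
        rcases conn_decomp s(b.1, b.2) P with h1 | ⟨a, bb, hae, _, _, Q, T⟩
        · exact hpiv.2.1 ⟨y, hy, conn_mono
            (closeEdge_mono (restrict_le ω Aᶜ) s(b.1, b.2)) h1⟩
        · rcases Sym2.eq_iff.mp hae with ⟨rfl, rfl⟩ | ⟨rfl, rfl⟩
          · exact hEp.1.2 (conn_mono (closeEdge_le _ s(b.1, b.2)) Q)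
          · exact pivArm_not_conn_far hpiv (conn_mono
              (closeEdge_mono (restrict_le ω Aᶜ) s(b.1, b.2)) Q)
  · -- Edprime and the cut events are disjoint
    rintro ⟨hE, b, hcut⟩
    exact hE.2 b.1 b.2 hcut.2.2.2 hcut.2.1.1
  · -- uniqueness of the cutting bond
    intro b b' h h'
    by_contra hbne
    rcases order_piv h.2.2.2 h'.2.2.2 h.2.2.1 h'.2.2.1 hbne with hpc | hpc
    · exact h'.2.1.2 b.1 b.2 hpc h.2.1.1
    · exact h.2.1.2 b'.1 b'.2 hpc h'.2.1.1

end Percolation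
end
end
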